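/- arXiv:1006.4079 — 6 statements merged into one kernel-verified Lean document; each statement's English description precedes it below -/
import Mathlib

section
/- Let (𝔤, B) be a finite-dimensional complex quadratic Lie algebra with orthonormal basis (Xᵢ), and let v = −(1/12) Σ_{i,j,k} B(Xᵢ,[Xⱼ,Xₖ]) XᵢXⱼXₖ ∈ C(𝔤) be the cubic element. Then for every x ∈ 𝔤 one has, in C(𝔤), v·x + x·v = −(1/2) Σ_{i,j} B(x,[Xᵢ,Xⱼ]) XᵢXⱼ. Equivalently, d_v(x) + δ(x) = 0, where d_v(a) = v·a − κ(a)·v and δ is the transpose of the Lie bracket. -/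
open CliffordAlgebra

/-- For a finite-dimensional complex quadratic Lie algebra `(𝔤, B)` with orthonormal
basis `(Xᵢ)` and cubic element
`v = -(1/12) ∑ B(Xᵢ,[Xⱼ,Xₖ]) XᵢXⱼXₖ` in the Clifford algebra of `Q(x) = B(x,x)`,
one has `v·x + x·v = -(1/2) ∑ B(x,[Xᵢ,Xⱼ]) XᵢXⱼ` for all `x ∈ 𝔤`. -/
theorem cubic_element_bracket {L : Type*} [LieRing L] [LieAlgebra ℂ L]
    [FiniteDimensional ℂ L]
    (B : LinearMap.BilinForm ℂ L)
    (hB_symm : ∀ x y : L, B x y = B y x)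
    (hB_inv : ∀ x y z : L, B ⁅x, y⁆ z + B y ⁅x, z⁆ = 0)
    (hB_nd : B.Nondegenerate)
    {I : Type*} [Fintype I] [DecidableEq I] (X : Module.Basis I ℂ L)
    (hX : ∀ i j, B (X i) (X j) = if i = j then 1 else 0)
    (v : CliffordAlgebra B.toQuadraticMap)
    (hv : v = (-(1/12 : ℂ)) • ∑ i : I, ∑ j : I, ∑ k : I,
        B (X i) ⁅X j, X k⁆ •
          (ι B.toQuadraticMap (X i) * ι B.toQuadraticMap (X j) * ι B.toQuadraticMap (X k)))
    (x : L) :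
    v * ι B.toQuadraticMap x + ι B.toQuadraticMap x * v
      = (-(1/2 : ℂ)) • ∑ i : I, ∑ j : I,
          B x ⁅X i, X j⁆ • (ι B.toQuadraticMap (X i) * ι B.toQuadraticMap (X j)) := by
  set Q := B.toQuadraticMap with hQ
  -- cyclicity of the structure constants
  have cyc : ∀ a b c : L, B a ⁅b, c⁆ = B c ⁅a, b⁆ := by
    intro a b c
    have h := hB_inv b c a
    have h2 : B c ⁅b, a⁆ = - B c ⁅a, b⁆ := by
      rw [← lie_skew a b, map_neg, neg_neg]
    have h3 : B ⁅b, c⁆ a = B a ⁅b, c⁆ := hB_symm _ _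
    linear_combination h - h2 - h3
  -- orthonormal expansion
  have expand : ∀ (y w : L), ∑ k : I, B y (X k) * B (X k) w = B y w := by
    intro y w
    have hrep : ∀ k, B y (X k) = X.repr y k := by
      intro k
      conv_lhs => rw [← X.sum_repr y]
      rw [map_sum]
      simp only [LinearMap.sum_apply, map_smul, LinearMap.smul_apply, hX, smul_eq_mul,
        mul_ite, mul_one, mul_zero]
      rw [Finset.sum_ite_eq' Finset.univ k (fun m => X.repr y m)]
      simp
    calc ∑ k : I, B y (X k) * B (X k) w = ∑ k : I, X.repr y k * B (X k) w := by
          simp only [hrep]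
      _ = B y w := by
          conv_rhs => rw [← X.sum_repr y]
          rw [map_sum]
          simp [smul_eq_mul]
  -- basic anticommutation in the Clifford algebra
  have hswap : ∀ w : L, ι Q x * ι Q w
      = (2 * B x w) • (1 : CliffordAlgebra Q) - ι Q w * ι Q x := by
    intro w
    rw [ι_mul_ι_comm, LinearMap.BilinMap.polar_toQuadraticMap, hB_symm w x, ← two_mul,
      Algebra.algebraMap_eq_smul_one]
  have movel : ∀ (w : L) (m : CliffordAlgebra Q),
      ι Q x * (ι Q w * m) = (2 * B x w) • m - ι Q w * (ι Q x * m) := by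
    intro w m
    rw [← mul_assoc, hswap w, sub_mul, smul_mul_assoc, one_mul, mul_assoc]
  -- key triple-product identity
  have key : ∀ a b c : L,
      (ι Q a * ι Q b * ι Q c) * ι Q x + ι Q x * (ι Q a * ι Q b * ι Q c)
        = (2 * B x c) • (ι Q a * ι Q b) - (2 * B x b) • (ι Q a * ι Q c)
            + (2 * B x a) • (ι Q b * ι Q c) := by
    intro a b c
    have h1 : ι Q x * (ι Q a * ι Q b * ι Q c)
        = (2 * B x a) • (ι Q b * ι Q c) - (2 * B x b) • (ι Q a * ι Q c)
            + (2 * B x c) • (ι Q a * ι Q b) - (ι Q a * ι Q b * ι Q c) * ι Q x := by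
      rw [mul_assoc (ι Q a), movel a, movel b, hswap c]
      simp only [mul_sub, smul_sub, mul_smul_comm, mul_one, mul_assoc]
      abel
    rw [h1]
    abel
  -- abbreviation for the target sum
  set S : CliffordAlgebra Q :=
    ∑ i : I, ∑ j : I, B x ⁅X i, X j⁆ • (ι Q (X i) * ι Q (X j)) with hS
  -- inner-sum computations
  have hinner1 : ∀ i j : I,
      ∑ k : I, B (X i) ⁅X j, X k⁆ * (2 * B x (X k)) = 2 * B x ⁅X i, X j⁆ := by
    intro i j
    calc ∑ k : I, B (X i) ⁅X j, X k⁆ * (2 * B x (X k))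
        = 2 * ∑ k : I, B x (X k) * B (X k) ⁅X i, X j⁆ := by
          rw [Finset.mul_sum]
          refine Finset.sum_congr rfl fun k _ => ?_
          rw [cyc (X i) (X j) (X k)]
          ring
      _ = 2 * B x ⁅X i, X j⁆ := by rw [expand]
  have hinner2 : ∀ i k : I,
      ∑ j : I, B (X i) ⁅X j, X k⁆ * (2 * B x (X j)) = -(2 * B x ⁅X i, X k⁆) := by
    intro i k
    calc ∑ j : I, B (X i) ⁅X j, X k⁆ * (2 * B x (X j))
        = 2 * ∑ j : I, B x (X j) * B (X j) ⁅X k, X i⁆ := by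
          rw [Finset.mul_sum]
          refine Finset.sum_congr rfl fun j _ => ?_
          rw [cyc (X i) (X j) (X k), cyc (X k) (X i) (X j)]
          ring
      _ = 2 * B x ⁅X k, X i⁆ := by rw [expand]
      _ = -(2 * B x ⁅X i, X k⁆) := by rw [← lie_skew (X i) (X k), map_neg]; ring
  have hinner3 : ∀ j k : I,
      ∑ i : I, B (X i) ⁅X j, X k⁆ * (2 * B x (X i)) = 2 * B x ⁅X j, X k⁆ := by
    intro j k
    calc ∑ i : I, B (X i) ⁅X j, X k⁆ * (2 * B x (X i))
        = 2 * ∑ i : I, B x (X i) * B (X i) ⁅X j, X k⁆ := by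
          rw [Finset.mul_sum]
          refine Finset.sum_congr rfl fun i _ => ?_
          ring
      _ = 2 * B x ⁅X j, X k⁆ := by rw [expand]
  -- three partial sums
  have hT1 : (∑ i : I, ∑ j : I, ∑ k : I,
      B (X i) ⁅X j, X k⁆ • ((2 * B x (X k)) • (ι Q (X i) * ι Q (X j))))
        = (2:ℂ) • S := by
    rw [hS, Finset.smul_sum]
    refine Finset.sum_congr rfl fun i _ => ?_
    rw [Finset.smul_sum]
    refine Finset.sum_congr rfl fun j _ => ?_
    rw [smul_smul]
    simp only [smul_smul, ← Finset.sum_smul, hinner1 i j]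
  have hT2 : (∑ i : I, ∑ j : I, ∑ k : I,
      B (X i) ⁅X j, X k⁆ • ((2 * B x (X j)) • (ι Q (X i) * ι Q (X k))))
        = (-2:ℂ) • S := by
    rw [hS, Finset.smul_sum]
    refine Finset.sum_congr rfl fun i _ => ?_
    rw [Finset.sum_comm, Finset.smul_sum]
    refine Finset.sum_congr rfl fun k _ => ?_
    rw [smul_smul]
    simp only [smul_smul, ← Finset.sum_smul, hinner2 i k]
    congr 1
    ring
  have hT3 : (∑ i : I, ∑ j : I, ∑ k : I,
      B (X i) ⁅X j, X k⁆ • ((2 * B x (X i)) • (ι Q (X j) * ι Q (X k))))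
        = (2:ℂ) • S := by
    rw [Finset.sum_comm]
    rw [hS, Finset.smul_sum]
    refine Finset.sum_congr rfl fun j _ => ?_
    rw [Finset.sum_comm, Finset.smul_sum]
    refine Finset.sum_congr rfl fun k _ => ?_
    rw [smul_smul]
    simp only [smul_smul, ← Finset.sum_smul, hinner3 j k]
  -- put everything together
  rw [hv]
  show ((-(1/12 : ℂ)) • ∑ i : I, ∑ j : I, ∑ k : I, B (X i) ⁅X j, X k⁆ • (ι Q (X i) * ι Q (X j) * ι Q (X k))) * ι Q x + ι Q x * ((-(1/12 : ℂ)) • ∑ i : I, ∑ j : I, ∑ k : I, B (X i) ⁅X j, X k⁆ • (ι Q (X i) * ι Q (X j) * ι Q (X k))) = (-(1/2 : ℂ)) • S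
  simp only [smul_mul_assoc, mul_smul_comm, ← smul_add]
  simp only [Finset.sum_mul, Finset.mul_sum, smul_mul_assoc, mul_smul_comm,
    ← Finset.sum_add_distrib, ← smul_add]
  simp only [key, smul_sub, smul_add, Finset.sum_add_distrib, Finset.sum_sub_distrib]
  rw [hT1, hT2, hT3]
  show _ = (-(1/2 : ℂ)) • S
  module
end

section
/- Let (𝔤, B) be a finite-dimensional complex quadratic Lie algebra with orthonormal basis (Xᵢ), and let v = −(1/12) Σ_{i,j,k} B(Xᵢ,[Xⱼ,Xₖ]) XᵢXⱼXₖ ∈ C(𝔤). Then v² lies in the center of C(𝔤); in particular v²·a = a·v² for every a ∈ C(𝔤). -/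
open CliffordAlgebra

section AuxCubic

/-! ### Generic noncommutative-ring auxiliary lemmas -/

lemma aux_comm_mul3 {A : Type*} [Ring A] (t x y z : A) :
    t * (x * y * z) - (x * y * z) * t =
      (t * x - x * t) * y * z + x * ((t * y - y * t) * z) + x * y * (t * z - z * t) := by
  noncomm_ring

lemma aux_antiTri {A : Type*} [Ring A] [Algebra ℂ A] (a x y z : A) (dx dy dz : ℂ)
    (hx : a * x + x * a = algebraMap ℂ A dx)
    (hy : a * y + y * a = algebraMap ℂ A dy)
    (hz : a * z + z * a = algebraMap ℂ A dz) :
    a * (x * y * z) + (x * y * z) * a = dx • (y * z) - dy • (x * z) + dz • (x * y) := by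
  have hx' : a * x = dx • (1 : A) - x * a := by
    rw [← Algebra.algebraMap_eq_smul_one, eq_sub_iff_add_eq]; exact hx
  have hy' : a * y = dy • (1 : A) - y * a := by
    rw [← Algebra.algebraMap_eq_smul_one, eq_sub_iff_add_eq]; exact hy
  have hz' : a * z = dz • (1 : A) - z * a := by
    rw [← Algebra.algebraMap_eq_smul_one, eq_sub_iff_add_eq]; exact hz
  have h1 : a * (x * y * z) = dx • (y * z) - dy • (x * z) + dz • (x * y) - x * y * z * a := by
    calc a * (x * y * z) = (a * x) * (y * z) := by noncomm_ring
      _ = (dx • (1:A) - x * a) * (y * z) := by rw [hx']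
      _ = dx • (y * z) - x * ((a * y) * z) := by
            simp only [sub_mul, smul_mul_assoc, one_mul, mul_assoc]
      _ = dx • (y * z) - x * ((dy • (1:A) - y * a) * z) := by rw [hy']
      _ = dx • (y * z) - dy • (x * z) + (x * y) * (a * z) := by
            simp only [sub_mul, smul_mul_assoc, one_mul, mul_sub, mul_smul_comm, mul_assoc]
            noncomm_ring
      _ = dx • (y * z) - dy • (x * z) + (x * y) * (dz • (1:A) - z * a) := by rw [hz']
      _ = dx • (y * z) - dy • (x * z) + dz • (x * y) - x * y * z * a := by
            simp only [mul_sub, mul_smul_comm, mul_one, mul_assoc]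
            noncomm_ring
  rw [h1]; noncomm_ring

lemma aux_quadLin {A : Type*} [Ring A] [Algebra ℂ A] (a x y : A) (dx dy : ℂ)
    (hx : a * x + x * a = algebraMap ℂ A dx)
    (hy : a * y + y * a = algebraMap ℂ A dy) :
    (x * y) * a - a * (x * y) = dy • x - dx • y := by
  have hx' : a * x = dx • (1 : A) - x * a := by
    rw [← Algebra.algebraMap_eq_smul_one, eq_sub_iff_add_eq]; exact hx
  have hy' : a * y = dy • (1 : A) - y * a := by
    rw [← Algebra.algebraMap_eq_smul_one, eq_sub_iff_add_eq]; exact hy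
  have h1 : a * (x * y) = dx • y - dy • x + x * y * a := by
    calc a * (x * y) = (a * x) * y := by noncomm_ring
      _ = (dx • (1:A) - x * a) * y := by rw [hx']
      _ = dx • y - x * (a * y) := by
            simp only [sub_mul, smul_mul_assoc, one_mul, mul_assoc]
      _ = dx • y - x * (dy • (1:A) - y * a) := by
            rw [hy']
      _ = dx • y - dy • x + x * y * a := by
            simp only [mul_sub, mul_smul_comm, mul_one, mul_assoc]
            noncomm_ring
  rw [h1]; noncomm_ring

/-! ### Sum-reindexing lemmas -/

lemma aux_swap34 {I : Type*} [Fintype I] {M : Type*} [AddCommMonoid M]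
    (f : I → I → I → I → M) :
    (∑ i : I, ∑ j : I, ∑ k : I, ∑ p : I, f i j k p)
      = ∑ i : I, ∑ j : I, ∑ k : I, ∑ p : I, f i j p k :=
  Finset.sum_congr rfl fun _ _ => Finset.sum_congr rfl fun _ _ => Finset.sum_comm

lemma aux_swap13 {I : Type*} [Fintype I] {M : Type*} [AddCommMonoid M]
    (g : I → I → I → M) :
    (∑ a : I, ∑ b : I, ∑ c : I, g a b c) = ∑ a : I, ∑ b : I, ∑ c : I, g c b a := by
  calc (∑ a : I, ∑ b : I, ∑ c : I, g a b c)
      = ∑ a : I, ∑ c : I, ∑ b : I, g a b c :=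
        Finset.sum_congr rfl fun a _ => Finset.sum_comm
    _ = ∑ c : I, ∑ a : I, ∑ b : I, g a b c := Finset.sum_comm
    _ = ∑ c : I, ∑ b : I, ∑ a : I, g a b c :=
        Finset.sum_congr rfl fun c _ => Finset.sum_comm

lemma aux_swap24 {I : Type*} [Fintype I] {M : Type*} [AddCommMonoid M]
    (f : I → I → I → I → M) :
    (∑ i : I, ∑ j : I, ∑ k : I, ∑ p : I, f i j k p)
      = ∑ i : I, ∑ j : I, ∑ k : I, ∑ p : I, f i p k j :=
  Finset.sum_congr rfl fun _ _ => aux_swap13 _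

lemma aux_swap14 {I : Type*} [Fintype I] {M : Type*} [AddCommMonoid M]
    (f : I → I → I → I → M) :
    (∑ i : I, ∑ j : I, ∑ k : I, ∑ p : I, f i j k p)
      = ∑ i : I, ∑ j : I, ∑ k : I, ∑ p : I, f p j k i := by
  calc (∑ i : I, ∑ j : I, ∑ k : I, ∑ p : I, f i j k p)
      = ∑ j : I, ∑ i : I, ∑ k : I, ∑ p : I, f i j k p := Finset.sum_comm
    _ = ∑ j : I, ∑ i : I, ∑ k : I, ∑ p : I, f p j k i :=
        Finset.sum_congr rfl fun j _ => aux_swap13 _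
    _ = ∑ i : I, ∑ j : I, ∑ k : I, ∑ p : I, f p j k i := Finset.sum_comm

/-! ### Lie algebra auxiliary lemmas -/

variable {L : Type*} [LieRing L] [LieAlgebra ℂ L]

omit [LieAlgebra ℂ L] in
lemma aux_sum_lie {α : Type*} (s : Finset α) (f : α → L) (x : L) :
    ⁅∑ a ∈ s, f a, x⁆ = ∑ a ∈ s, ⁅f a, x⁆ := by
  induction s using Finset.cons_induction with
  | empty => simp
  | cons a s ha ih => simp [Finset.sum_cons, add_lie, ih]

omit [LieAlgebra ℂ L] in
lemma aux_lie_sum {α : Type*} (s : Finset α) (f : α → L) (x : L) :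
    ⁅x, ∑ a ∈ s, f a⁆ = ∑ a ∈ s, ⁅x, f a⁆ := by
  induction s using Finset.cons_induction with
  | empty => simp
  | cons a s ha ih => simp [Finset.sum_cons, lie_add, ih]

variable (B : LinearMap.BilinForm ℂ L)
  {I : Type*} [Fintype I] [DecidableEq I] (X : Module.Basis I ℂ L)

/-- Structure constants relative to the orthonormal basis. -/
noncomputable def cc (i j k : I) : ℂ := B (X i) ⁅X j, X k⁆

/-- Images of the basis vectors in the Clifford algebra. -/
noncomputable abbrev EE (i : I) : CliffordAlgebra B.toQuadraticMap :=
  ι B.toQuadraticMap (X i)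

/-- The quadratic element `t_m = ∑_{j,k} c_{mjk} X_j X_k`. -/
noncomputable def tt (m : I) : CliffordAlgebra B.toQuadraticMap :=
  ∑ j : I, ∑ k : I, cc B X m j k • (EE B X j * EE B X k)

/-- The cubic element (without normalization): `∑ c_{ijk} X_i X_j X_k`. -/
noncomputable def SS : CliffordAlgebra B.toQuadraticMap :=
  ∑ i : I, ∑ j : I, ∑ k : I, cc B X i j k • (EE B X i * EE B X j * EE B X k)

variable (hX : ∀ i j, B (X i) (X j) = if i = j then 1 else 0)
  (hB_symm : ∀ x y : L, B x y = B y x)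
  (hB_inv : ∀ x y z : L, B ⁅x, y⁆ z + B y ⁅x, z⁆ = 0)

include hX in
lemma aux_repr (u : L) : (∑ p : I, B (X p) u • X p) = u := by
  have h : ∀ p, B (X p) u = X.repr u p := by
    intro p
    conv_lhs => rw [← X.sum_repr u]
    simp [hX, mul_ite, Finset.sum_ite_eq', -Module.Basis.sum_repr]
  simp_rw [h]
  exact X.sum_repr u

include hX in
lemma aux_BB (u w : L) : (∑ p : I, B (X p) u * B (X p) w) = B w u := by
  conv_rhs => rw [← aux_repr B X hX w]
  simp [Finset.sum_apply, mul_comm]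

include hX in
lemma aux_lin1 (w : L) (i k : I) :
    (∑ p : I, B (X p) w * B (X i) ⁅X p, X k⁆) = B (X i) ⁅w, X k⁆ := by
  conv_rhs => rw [← aux_repr B X hX w]
  simp [aux_sum_lie, smul_lie, smul_eq_mul, mul_comm]

include hX in
lemma aux_lin2 (w : L) (i j : I) :
    (∑ p : I, B (X p) w * B (X i) ⁅X j, X p⁆) = B (X i) ⁅X j, w⁆ := by
  conv_rhs => rw [← aux_repr B X hX w]
  simp [aux_lie_sum, lie_smul, smul_eq_mul, mul_comm]

include hB_symm hB_inv in
lemma aux_cyc (i j k : I) : cc B X i j k = cc B X k i j := by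
  unfold cc
  have h := hB_inv (X j) (X i) (X k)
  have e1 : ⁅X j, X i⁆ = -⁅X i, X j⁆ := (lie_skew (X j) (X i)).symm
  have h3 : B ⁅X j, X i⁆ (X k) = -(B (X k) ⁅X i, X j⁆) := by
    rw [e1, map_neg, LinearMap.neg_apply, hB_symm]
  rw [h3] at h
  linear_combination h

include hB_symm hB_inv in
lemma aux_skew (i j k : I) : cc B X i j k = -cc B X i k j := by
  unfold cc
  have e1 : ⁅X k, X j⁆ = -⁅X j, X k⁆ := (lie_skew (X k) (X j)).symm
  rw [e1, map_neg, neg_neg]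

include hX hB_symm hB_inv in
lemma aux_jac (m i j k : I) :
    (∑ p : I, (cc B X p j k * cc B X m i p + cc B X i p k * cc B X m j p
      + cc B X i j p * cc B X m k p)) = 0 := by
  have S1 : (∑ p : I, cc B X p j k * cc B X m i p) = B ⁅X m, X i⁆ ⁅X j, X k⁆ := by
    have e1 : ∀ p, cc B X m i p = cc B X p m i :=
      fun p => aux_cyc B X hB_symm hB_inv m i p
    simp_rw [e1]; unfold cc
    exact aux_BB B X hX ⁅X j, X k⁆ ⁅X m, X i⁆
  have S2 : (∑ p : I, cc B X i p k * cc B X m j p) = B (X i) ⁅⁅X m, X j⁆, X k⁆ := by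
    have e2 : ∀ p, cc B X m j p = cc B X p m j :=
      fun p => aux_cyc B X hB_symm hB_inv m j p
    simp_rw [e2]; unfold cc
    rw [show (∑ p : I, B (X i) ⁅X p, X k⁆ * B (X p) ⁅X m, X j⁆)
        = ∑ p : I, B (X p) ⁅X m, X j⁆ * B (X i) ⁅X p, X k⁆ from
      Finset.sum_congr rfl fun p _ => mul_comm _ _]
    exact aux_lin1 B X hX ⁅X m, X j⁆ i k
  have S3 : (∑ p : I, cc B X i j p * cc B X m k p) = B (X i) ⁅X j, ⁅X m, X k⁆⁆ := by
    have e3 : ∀ p, cc B X m k p = cc B X p m k :=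
      fun p => aux_cyc B X hB_symm hB_inv m k p
    simp_rw [e3]; unfold cc
    rw [show (∑ p : I, B (X i) ⁅X j, X p⁆ * B (X p) ⁅X m, X k⁆)
        = ∑ p : I, B (X p) ⁅X m, X k⁆ * B (X i) ⁅X j, X p⁆ from
      Finset.sum_congr rfl fun p _ => mul_comm _ _]
    exact aux_lin2 B X hX ⁅X m, X k⁆ i j
  rw [Finset.sum_add_distrib, Finset.sum_add_distrib, S1, S2, S3]
  have h := hB_inv (X m) (X i) ⁅X j, X k⁆
  rw [leibniz_lie, map_add] at h
  linear_combination h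

include hX hB_symm in
lemma aux_ee (i j : I) :
    EE B X i * EE B X j + EE B X j * EE B X i
      = algebraMap ℂ (CliffordAlgebra B.toQuadraticMap) (if i = j then 2 else 0) := by
  rw [ι_mul_ι_add_swap, LinearMap.BilinMap.polar_toQuadraticMap]
  congr 1
  rw [hB_symm (X j) (X i), hX i j]
  split <;> norm_num

include hX hB_symm hB_inv in
lemma aux_A' (m : I) :
    EE B X m * SS B X + SS B X * EE B X m = (6 : ℂ) • tt B X m := by
  have key : ∀ i j k : I,
      EE B X m * (EE B X i * EE B X j * EE B X k)
        + (EE B X i * EE B X j * EE B X k) * EE B X m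
      = (if m = i then (2:ℂ) else 0) • (EE B X j * EE B X k)
        - (if m = j then (2:ℂ) else 0) • (EE B X i * EE B X k)
        + (if m = k then (2:ℂ) else 0) • (EE B X i * EE B X j) := fun i j k =>
    aux_antiTri _ _ _ _ _ _ _ (aux_ee B X hX hB_symm m i) (aux_ee B X hX hB_symm m j)
      (aux_ee B X hX hB_symm m k)
  have step1 : EE B X m * SS B X + SS B X * EE B X m
      = ∑ i : I, ∑ j : I, ∑ k : I, cc B X i j k •
          (EE B X m * (EE B X i * EE B X j * EE B X k)
            + (EE B X i * EE B X j * EE B X k) * EE B X m) := by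
    unfold SS
    simp only [Finset.mul_sum, Finset.sum_mul, mul_smul_comm, smul_mul_assoc,
      ← Finset.sum_add_distrib, ← smul_add]
  rw [step1]
  simp only [key, smul_sub, smul_add, smul_smul, mul_ite, mul_zero, ite_smul, zero_smul,
    smul_ite, smul_zero, Finset.sum_sub_distrib, Finset.sum_add_distrib,
    Finset.sum_ite_irrel, Finset.sum_const_zero, Finset.sum_ite_eq, Finset.mem_univ, if_true]
  have h2 : ∀ a b : I, cc B X a m b = -cc B X m a b := fun a b => by
    rw [aux_skew B X hB_symm hB_inv a m b, aux_cyc B X hB_symm hB_inv a b m]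
  have h3 : ∀ a b : I, cc B X a b m = cc B X m a b := fun a b =>
    aux_cyc B X hB_symm hB_inv a b m
  have e2 : (∑ x : I, ∑ y : I, (cc B X x m y * 2) • (EE B X x * EE B X y))
      = ∑ x : I, ∑ y : I, (-(cc B X m x y * 2)) • (EE B X x * EE B X y) :=
    Finset.sum_congr rfl fun x _ => Finset.sum_congr rfl fun y _ => by
      rw [h2 x y, neg_mul]
  have e3 : (∑ x : I, ∑ y : I, (cc B X x y m * 2) • (EE B X x * EE B X y))
      = ∑ x : I, ∑ y : I, (cc B X m x y * 2) • (EE B X x * EE B X y) :=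
    Finset.sum_congr rfl fun x _ => Finset.sum_congr rfl fun y _ => by rw [h3 x y]
  rw [e2, e3]
  unfold tt
  simp only [neg_smul, Finset.sum_neg_distrib, sub_neg_eq_add,
    ← Finset.sum_add_distrib, ← add_smul, Finset.smul_sum, smul_smul]
  refine Finset.sum_congr rfl fun x _ => Finset.sum_congr rfl fun y _ => ?_
  congr 1
  ring

include hX hB_symm hB_inv in
lemma aux_B (m a : I) :
    tt B X m * EE B X a - EE B X a * tt B X m = ∑ j : I, (4 * cc B X m j a) • EE B X j := by
  have key : ∀ j k : I,
      (EE B X j * EE B X k) * EE B X a - EE B X a * (EE B X j * EE B X k)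
        = (if a = k then (2:ℂ) else 0) • EE B X j
          - (if a = j then (2:ℂ) else 0) • EE B X k := fun j k =>
    aux_quadLin _ _ _ _ _ (aux_ee B X hX hB_symm a j) (aux_ee B X hX hB_symm a k)
  have step1 : tt B X m * EE B X a - EE B X a * tt B X m
      = ∑ j : I, ∑ k : I, cc B X m j k •
          ((EE B X j * EE B X k) * EE B X a - EE B X a * (EE B X j * EE B X k)) := by
    unfold tt
    simp only [Finset.mul_sum, Finset.sum_mul, mul_smul_comm, smul_mul_assoc,
      ← Finset.sum_sub_distrib, ← smul_sub]
  rw [step1]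
  simp only [key, smul_sub, smul_smul, mul_ite, mul_zero, ite_smul, zero_smul, smul_ite,
    smul_zero, Finset.sum_sub_distrib, Finset.sum_ite_irrel, Finset.sum_const_zero,
    Finset.sum_ite_eq, Finset.mem_univ, if_true]
  rw [← Finset.sum_sub_distrib]
  refine Finset.sum_congr rfl fun x _ => ?_
  rw [aux_skew B X hB_symm hB_inv m a x, ← sub_smul]
  congr 1
  ring

include hX hB_symm hB_inv in
lemma aux_C' (m : I) : tt B X m * SS B X - SS B X * tt B X m = 0 := by
  have key : ∀ i j k : I,
      tt B X m * (EE B X i * EE B X j * EE B X k)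
        - (EE B X i * EE B X j * EE B X k) * tt B X m
      = (∑ p : I, (4 * cc B X m p i) • (EE B X p * EE B X j * EE B X k))
        + (∑ p : I, (4 * cc B X m p j) • (EE B X i * EE B X p * EE B X k))
        + (∑ p : I, (4 * cc B X m p k) • (EE B X i * EE B X j * EE B X p)) := by
    intro i j k
    rw [aux_comm_mul3, aux_B B X hX hB_symm hB_inv m i, aux_B B X hX hB_symm hB_inv m j,
      aux_B B X hX hB_symm hB_inv m k]
    simp only [Finset.sum_mul, Finset.mul_sum, smul_mul_assoc, mul_smul_comm, ← mul_assoc]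
  have step1 : tt B X m * SS B X - SS B X * tt B X m
      = ∑ i : I, ∑ j : I, ∑ k : I, cc B X i j k •
          (tt B X m * (EE B X i * EE B X j * EE B X k)
            - (EE B X i * EE B X j * EE B X k) * tt B X m) := by
    unfold SS
    simp only [Finset.mul_sum, Finset.sum_mul, mul_smul_comm, smul_mul_assoc,
      ← Finset.sum_sub_distrib, ← smul_sub]
  rw [step1]
  simp only [key, smul_add, Finset.smul_sum, smul_smul, Finset.sum_add_distrib]
  rw [aux_swap14 (fun i j k p =>
        (cc B X i j k * (4 * cc B X m p i)) • (EE B X p * EE B X j * EE B X k)),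
      aux_swap24 (fun i j k p =>
        (cc B X i j k * (4 * cc B X m p j)) • (EE B X i * EE B X p * EE B X k)),
      aux_swap34 (fun i j k p =>
        (cc B X i j k * (4 * cc B X m p k)) • (EE B X i * EE B X j * EE B X p))]
  simp only [← Finset.sum_add_distrib, ← add_smul, ← Finset.sum_smul]
  refine Finset.sum_eq_zero fun i _ => Finset.sum_eq_zero fun j _ =>
    Finset.sum_eq_zero fun k _ => ?_
  have hz : (∑ p : I, (cc B X p j k * (4 * cc B X m i p) + cc B X i p k * (4 * cc B X m j p)
      + cc B X i j p * (4 * cc B X m k p))) = 0 := by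
    have h4 : (∑ p : I, (cc B X p j k * (4 * cc B X m i p) + cc B X i p k * (4 * cc B X m j p)
        + cc B X i j p * (4 * cc B X m k p)))
        = ∑ p : I, 4 * (cc B X p j k * cc B X m i p + cc B X i p k * cc B X m j p
            + cc B X i j p * cc B X m k p) :=
      Finset.sum_congr rfl fun p _ => by ring
    rw [h4, ← Finset.mul_sum, aux_jac B X hX hB_symm hB_inv m i j k, mul_zero]
  rw [hz, zero_smul]

end AuxCubic

/-- For a finite-dimensional complex quadratic Lie algebra `(𝔤, B)` with orthonormal
basis `(Xᵢ)`, the square of the cubic element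
`v = -(1/12) ∑ B(Xᵢ,[Xⱼ,Xₖ]) XᵢXⱼXₖ` lies in the center of the Clifford algebra. -/
theorem cubic_element_sq_mem_center {L : Type*} [LieRing L] [LieAlgebra ℂ L]
    [FiniteDimensional ℂ L]
    (B : LinearMap.BilinForm ℂ L)
    (hB_symm : ∀ x y : L, B x y = B y x)
    (hB_inv : ∀ x y z : L, B ⁅x, y⁆ z + B y ⁅x, z⁆ = 0)
    (hB_nd : B.Nondegenerate)
    {I : Type*} [Fintype I] [DecidableEq I] (X : Module.Basis I ℂ L)
    (hX : ∀ i j, B (X i) (X j) = if i = j then 1 else 0)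
    (v : CliffordAlgebra B.toQuadraticMap)
    (hv : v = (-(1/12 : ℂ)) • ∑ i : I, ∑ j : I, ∑ k : I,
        B (X i) ⁅X j, X k⁆ •
          (ι B.toQuadraticMap (X i) * ι B.toQuadraticMap (X j) * ι B.toQuadraticMap (X k))) :
    v ^ 2 ∈ Subalgebra.center ℂ (CliffordAlgebra B.toQuadraticMap) := by
  have hvS : v = (-(1/12 : ℂ)) • SS B X := hv
  have hcomm : ∀ m : I, v ^ 2 * EE B X m = EE B X m * v ^ 2 := by
    intro m
    have hA : EE B X m * v + v * EE B X m = ((-(1/12 : ℂ)) * 6) • tt B X m := by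
      rw [hvS, mul_smul_comm, smul_mul_assoc, ← smul_add,
        aux_A' B X hX hB_symm hB_inv m, smul_smul]
    have hC : tt B X m * v - v * tt B X m = 0 := by
      rw [hvS, mul_smul_comm, smul_mul_assoc, ← smul_sub,
        aux_C' B X hX hB_symm hB_inv m, smul_zero]
    have hkey : v ^ 2 * EE B X m - EE B X m * v ^ 2
        = v * (EE B X m * v + v * EE B X m) - (EE B X m * v + v * EE B X m) * v := by
      rw [sq]; noncomm_ring
    have h2 : v * (EE B X m * v + v * EE B X m) - (EE B X m * v + v * EE B X m) * v
        = ((-(1/12:ℂ)) * 6) • (v * tt B X m - tt B X m * v) := by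
      rw [hA, mul_smul_comm, smul_mul_assoc, ← smul_sub]
    have h0 : v * tt B X m - tt B X m * v = 0 := by
      rw [sub_eq_zero] at hC ⊢; exact hC.symm
    have hfin : v ^ 2 * EE B X m - EE B X m * v ^ 2 = 0 := by
      rw [hkey, h2, h0, smul_zero]
    rw [sub_eq_zero] at hfin; exact hfin
  have hgen : ∀ x : L, ι B.toQuadraticMap x * v ^ 2 = v ^ 2 * ι B.toQuadraticMap x := by
    intro x
    have hx : ι B.toQuadraticMap x = ∑ p : I, X.repr x p • EE B X p := by
      conv_lhs => rw [← X.sum_repr x]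
      simp [-Module.Basis.sum_repr]
    rw [hx]
    simp only [Finset.sum_mul, Finset.mul_sum, smul_mul_assoc, mul_smul_comm]
    exact Finset.sum_congr rfl fun p _ => by rw [← hcomm p]
  rw [Subalgebra.mem_center_iff]
  intro a
  induction a using CliffordAlgebra.induction with
  | algebraMap r => exact Algebra.commutes r (v ^ 2)
  | ι x => exact hgen x
  | mul a b ha hb => rw [mul_assoc, hb, ← mul_assoc, ha, mul_assoc]
  | add a b ha hb => rw [add_mul, mul_add, ha, hb]
end

section
/- Let (𝔤, B) be a finite-dimensional complex quadratic Lie algebra with orthonormal basis (Xᵢ), v = −(1/12) Σ_{i,j,k} B(Xᵢ,[Xⱼ,Xₖ]) XᵢXⱼXₖ ∈ C(𝔤) the cubic element, and define in the algebra U(𝔤) ⊗ C(𝔤) the Kostant Dirac operator D_𝔤 = Σᵢ Xᵢ ⊗ Xᵢ + 1 ⊗ v and the Casimir element Ω_𝔤 = Σᵢ Xᵢ² ∈ U(𝔤). Then D_𝔤² = Ω_𝔤 ⊗ 1 + 1 ⊗ v²; in other words, the first-order term in the square of the Dirac operator vanishes. -/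
open CliffordAlgebra TensorProduct QuadraticMap

lemma cubic_anticomm' {M : Type*} [AddCommGroup M] [Module ℂ M]
    (Q : QuadraticForm ℂ M) (x a b c : M) :
    ι Q x * (ι Q a * ι Q b * ι Q c) + (ι Q a * ι Q b * ι Q c) * ι Q x
      = polar Q x a • (ι Q b * ι Q c) - polar Q x b • (ι Q a * ι Q c)
        + polar Q x c • (ι Q a * ι Q b) := by
  have hxa : ι Q x * ι Q a = polar Q x a • 1 - ι Q a * ι Q x := by
    rw [ι_mul_ι_comm, Algebra.algebraMap_eq_smul_one]
  have hxb : ι Q x * ι Q b = polar Q x b • 1 - ι Q b * ι Q x := by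
    rw [ι_mul_ι_comm, Algebra.algebraMap_eq_smul_one]
  have hxc : ι Q x * ι Q c = polar Q x c • 1 - ι Q c * ι Q x := by
    rw [ι_mul_ι_comm, Algebra.algebraMap_eq_smul_one]
  have key : ι Q x * (ι Q a * ι Q b * ι Q c)
      = polar Q x a • (ι Q b * ι Q c) - polar Q x b • (ι Q a * ι Q c)
        + polar Q x c • (ι Q a * ι Q b) - (ι Q a * ι Q b * ι Q c) * ι Q x := by
    calc ι Q x * (ι Q a * ι Q b * ι Q c)
        = (ι Q x * ι Q a) * (ι Q b * ι Q c) := by noncomm_ring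
      _ = polar Q x a • (ι Q b * ι Q c) - ι Q a * ((ι Q x * ι Q b) * ι Q c) := by
          rw [hxa]; simp [sub_mul, smul_mul_assoc, mul_assoc]
      _ = polar Q x a • (ι Q b * ι Q c) - polar Q x b • (ι Q a * ι Q c)
          + ι Q a * (ι Q b * (ι Q x * ι Q c)) := by
          rw [hxb]; simp [sub_mul, mul_sub, smul_mul_assoc, mul_smul_comm, mul_assoc]; abel
      _ = polar Q x a • (ι Q b * ι Q c) - polar Q x b • (ι Q a * ι Q c)
          + polar Q x c • (ι Q a * ι Q b) - (ι Q a * ι Q b * ι Q c) * ι Q x := by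
          rw [hxc]; simp [mul_sub, mul_smul_comm, mul_assoc]; abel
  rw [key]; abel

set_option maxHeartbeats 1000000 in
/-- Kostant Dirac operator, case `𝔥 = 0`, without identifying `v²` as a scalar:
`D_𝔤² = Ω_𝔤 ⊗ 1 + 1 ⊗ v²` in `U(𝔤) ⊗ C(𝔤)`; the first-order term vanishes. -/
theorem dirac_sq_eq_casimir_add_cubic_sq {L : Type*} [LieRing L] [LieAlgebra ℂ L]
    [FiniteDimensional ℂ L]
    (B : LinearMap.BilinForm ℂ L)
    (hB_symm : ∀ x y : L, B x y = B y x)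
    (hB_inv : ∀ x y z : L, B ⁅x, y⁆ z + B y ⁅x, z⁆ = 0)
    (hB_nd : B.Nondegenerate)
    {I : Type*} [Fintype I] [DecidableEq I] (X : Module.Basis I ℂ L)
    (hX : ∀ i j, B (X i) (X j) = if i = j then 1 else 0)
    (v : CliffordAlgebra B.toQuadraticMap)
    (hv : v = (-(1/12 : ℂ)) • ∑ i : I, ∑ j : I, ∑ k : I,
        B (X i) ⁅X j, X k⁆ •
          (ι B.toQuadraticMap (X i) * ι B.toQuadraticMap (X j) * ι B.toQuadraticMap (X k)))
    (D : UniversalEnvelopingAlgebra ℂ L ⊗[ℂ] CliffordAlgebra B.toQuadraticMap)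
    (hD : D = ∑ i : I,
        (UniversalEnvelopingAlgebra.ι ℂ (X i)) ⊗ₜ[ℂ] (ι B.toQuadraticMap (X i))
        + 1 ⊗ₜ[ℂ] v)
    (Ω : UniversalEnvelopingAlgebra ℂ L)
    (hΩ : Ω = ∑ i : I, (UniversalEnvelopingAlgebra.ι ℂ (X i)) ^ 2) :
    D ^ 2 = Ω ⊗ₜ[ℂ] 1 + 1 ⊗ₜ[ℂ] (v ^ 2) := by
  -- scalars
  have hpol : ∀ x y : L, polar B.toQuadraticMap x y = 2 * B x y := by
    intro x y
    rw [LinearMap.BilinMap.polar_toQuadraticMap, hB_symm y x]; ring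
  -- antisymmetry of structure constants
  have hcc1 : ∀ i j k : I, B (X i) ⁅X j, X k⁆ = - B (X i) ⁅X k, X j⁆ := by
    intro i j k
    rw [← lie_skew (X k) (X j), LinearMap.map_neg, neg_neg]
  have hcc13 : ∀ i j k : I, B (X i) ⁅X j, X k⁆ = - B (X k) ⁅X j, X i⁆ := by
    intro i j k
    linear_combination hB_inv (X j) (X k) (X i) + hB_symm (X i) ⁅X j, X k⁆
  have hcc12 : ∀ i j k : I, B (X i) ⁅X j, X k⁆ = - B (X j) ⁅X i, X k⁆ := by
    intro i j k
    rw [hcc1 i j k, hcc13 i k j, hcc1 j k i]; ring_nf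
  have hdiag : ∀ l i : I, B (X l) ⁅X i, X i⁆ = 0 := by
    intro l i; linear_combination (1/2 : ℂ) * hcc1 l i i
  -- expansion in the orthonormal basis
  have hexp : ∀ y : L, y = ∑ l : I, B (X l) y • X l := by
    intro y
    have h1 : ∀ l : I, B (X l) y = X.repr y l := by
      intro l
      conv_lhs => rw [← X.sum_repr y]
      rw [map_sum]
      simp [hX, Finset.sum_ite_eq]
    simp only [h1]
    exact (X.sum_repr y).symm
  -- Clifford relations
  have hee : ∀ i j : I, ι B.toQuadraticMap (X i) * ι B.toQuadraticMap (X j)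
        + ι B.toQuadraticMap (X j) * ι B.toQuadraticMap (X i)
      = (if i = j then (2:ℂ) else 0) • (1 : CliffordAlgebra B.toQuadraticMap) := by
    intro i j
    rw [ι_mul_ι_add_swap, Algebra.algebraMap_eq_smul_one, hpol, hX]
    congr 1
    split_ifs <;> ring
  have h6 : ∀ l i j k : I,
      ι B.toQuadraticMap (X l) * (ι B.toQuadraticMap (X i) * ι B.toQuadraticMap (X j) * ι B.toQuadraticMap (X k))
        + (ι B.toQuadraticMap (X i) * ι B.toQuadraticMap (X j) * ι B.toQuadraticMap (X k)) * ι B.toQuadraticMap (X l)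
      = (if l = i then (2:ℂ) else 0) • (ι B.toQuadraticMap (X j) * ι B.toQuadraticMap (X k))
        - (if l = j then (2:ℂ) else 0) • (ι B.toQuadraticMap (X i) * ι B.toQuadraticMap (X k))
        + (if l = k then (2:ℂ) else 0) • (ι B.toQuadraticMap (X i) * ι B.toQuadraticMap (X j)) := by
    intro l i j k
    have h := cubic_anticomm' B.toQuadraticMap (X l) (X i) (X j) (X k)
    rw [hpol, hpol, hpol, hX, hX, hX] at h
    simpa [mul_ite, mul_one, mul_zero] using h
  -- anticommutator with v
  have hvl : ∀ l : I, ι B.toQuadraticMap (X l) * v + v * ι B.toQuadraticMap (X l)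
      = (-(1/2 : ℂ)) • ∑ j : I, ∑ k : I,
          B (X l) ⁅X j, X k⁆ • (ι B.toQuadraticMap (X j) * ι B.toQuadraticMap (X k)) := by
    intro l
    rw [hv, mul_smul_comm, smul_mul_assoc, ← smul_add]
    simp only [Finset.mul_sum, Finset.sum_mul, mul_smul_comm, smul_mul_assoc,
      ← Finset.sum_add_distrib, ← smul_add]
    simp only [h6]
    simp only [smul_sub, smul_add, smul_ite, smul_zero, ite_smul, zero_smul,
      Finset.sum_add_distrib, Finset.sum_sub_distrib, Finset.sum_ite_irrel,
      Finset.sum_const_zero, Finset.sum_ite_eq, Finset.mem_univ, if_true]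
    simp only [Finset.smul_sum]
    simp only [← Finset.sum_sub_distrib, ← Finset.sum_add_distrib]
    refine Finset.sum_congr rfl fun x _ => Finset.sum_congr rfl fun y _ => ?_
    simp only [smul_smul]
    rw [← sub_smul, ← add_smul]
    congr 1
    have h2 := hcc12 x l y
    have h3a := hcc13 x y l
    have h3b := hcc1 l y x
    linear_combination (1/6:ℂ) * h2 - (1/6:ℂ) * h3a + (1/6:ℂ) * h3b
  -- bracket in the enveloping algebra
  have hU : ∀ i j : I,
      UniversalEnvelopingAlgebra.ι ℂ (X i) * UniversalEnvelopingAlgebra.ι ℂ (X j)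
        - UniversalEnvelopingAlgebra.ι ℂ (X j) * UniversalEnvelopingAlgebra.ι ℂ (X i)
      = ∑ k : I, B (X k) ⁅X i, X j⁆ • UniversalEnvelopingAlgebra.ι ℂ (X k) := by
    intro i j
    have hb : ⁅X i, X j⁆ = ∑ k : I, B (X k) ⁅X i, X j⁆ • X k := hexp ⁅X i, X j⁆
    calc UniversalEnvelopingAlgebra.ι ℂ (X i) * UniversalEnvelopingAlgebra.ι ℂ (X j)
          - UniversalEnvelopingAlgebra.ι ℂ (X j) * UniversalEnvelopingAlgebra.ι ℂ (X i)
        = UniversalEnvelopingAlgebra.ι ℂ ⁅X i, X j⁆ := by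
          letI : LieRing (UniversalEnvelopingAlgebra ℂ L) := LieRing.ofAssociativeRing
          rw [LieHom.map_lie, Ring.lie_def]
      _ = ∑ k : I, B (X k) ⁅X i, X j⁆ • UniversalEnvelopingAlgebra.ι ℂ (X k) := by
          conv_lhs => rw [hb]
          simp
  
  -- tensor computation
  obtain ⟨S, hS⟩ : ∃ S, S = ∑ i : I,
      (UniversalEnvelopingAlgebra.ι ℂ (X i)) ⊗ₜ[ℂ] (ι B.toQuadraticMap (X i)) := ⟨_, rfl⟩
  obtain ⟨W, hW⟩ : ∃ W, W = ∑ i : I, ∑ j : I, ∑ k : I,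
      B (X i) ⁅X j, X k⁆ • ((UniversalEnvelopingAlgebra.ι ℂ (X i)) ⊗ₜ[ℂ]
        (ι B.toQuadraticMap (X j) * ι B.toQuadraticMap (X k))) := ⟨_, rfl⟩
  have hT2 : ((1 : UniversalEnvelopingAlgebra ℂ L) ⊗ₜ[ℂ] v) * (1 ⊗ₜ[ℂ] v)
      = (1 : UniversalEnvelopingAlgebra ℂ L) ⊗ₜ[ℂ] (v ^ 2) := by
    rw [Algebra.TensorProduct.tmul_mul_tmul, one_mul, pow_two]
  have hST : S * (1 ⊗ₜ[ℂ] v) + (1 ⊗ₜ[ℂ] v) * S = (-(1/2 : ℂ)) • W := by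
    rw [hS, hW]
    simp only [Finset.sum_mul, Finset.mul_sum, Algebra.TensorProduct.tmul_mul_tmul,
      one_mul, mul_one, ← Finset.sum_add_distrib, ← TensorProduct.tmul_add]
    simp only [hvl]
    simp only [TensorProduct.tmul_smul, TensorProduct.tmul_sum, Finset.smul_sum]
  have hSS : S * S = ∑ i : I, ∑ j : I,
      (UniversalEnvelopingAlgebra.ι ℂ (X i) * UniversalEnvelopingAlgebra.ι ℂ (X j)) ⊗ₜ[ℂ]
        (ι B.toQuadraticMap (X i) * ι B.toQuadraticMap (X j)) := by
    rw [hS]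
    simp only [Finset.sum_mul, Finset.mul_sum, Algebra.TensorProduct.tmul_mul_tmul]
    exact Finset.sum_comm
  have hSS2 : (2:ℂ) • (S * S) = (2:ℂ) • (Ω ⊗ₜ[ℂ] (1 : CliffordAlgebra B.toQuadraticMap)) + W := by
    rw [hSS, two_smul]
    nth_rewrite 2 [Finset.sum_comm]
    rw [← Finset.sum_add_distrib]
    simp only [← Finset.sum_add_distrib]
    have step : ∀ i j : I,
        (UniversalEnvelopingAlgebra.ι ℂ (X i) * UniversalEnvelopingAlgebra.ι ℂ (X j)) ⊗ₜ[ℂ]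
            (ι B.toQuadraticMap (X i) * ι B.toQuadraticMap (X j))
          + (UniversalEnvelopingAlgebra.ι ℂ (X j) * UniversalEnvelopingAlgebra.ι ℂ (X i)) ⊗ₜ[ℂ]
            (ι B.toQuadraticMap (X j) * ι B.toQuadraticMap (X i))
        = (UniversalEnvelopingAlgebra.ι ℂ (X i) * UniversalEnvelopingAlgebra.ι ℂ (X j)
            - UniversalEnvelopingAlgebra.ι ℂ (X j) * UniversalEnvelopingAlgebra.ι ℂ (X i)) ⊗ₜ[ℂ]
            (ι B.toQuadraticMap (X i) * ι B.toQuadraticMap (X j))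
          + (UniversalEnvelopingAlgebra.ι ℂ (X j) * UniversalEnvelopingAlgebra.ι ℂ (X i)) ⊗ₜ[ℂ]
            (ι B.toQuadraticMap (X i) * ι B.toQuadraticMap (X j)
              + ι B.toQuadraticMap (X j) * ι B.toQuadraticMap (X i)) := by
      intro i j
      rw [TensorProduct.sub_tmul, TensorProduct.tmul_add]
      abel
    simp only [step]
    simp only [Finset.sum_add_distrib]
    have part2 : (∑ i : I, ∑ j : I,
        (UniversalEnvelopingAlgebra.ι ℂ (X j) * UniversalEnvelopingAlgebra.ι ℂ (X i)) ⊗ₜ[ℂ]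
          (ι B.toQuadraticMap (X i) * ι B.toQuadraticMap (X j)
            + ι B.toQuadraticMap (X j) * ι B.toQuadraticMap (X i)))
        = (2:ℂ) • (Ω ⊗ₜ[ℂ] (1 : CliffordAlgebra B.toQuadraticMap)) := by
      simp only [hee, ite_smul, zero_smul, TensorProduct.tmul_ite, TensorProduct.tmul_zero,
        TensorProduct.tmul_smul, Finset.sum_ite_eq, Finset.mem_univ, if_true]
      rw [hΩ]
      simp only [pow_two, Finset.smul_sum, TensorProduct.sum_tmul]
    have part1 : (∑ i : I, ∑ j : I,
        (UniversalEnvelopingAlgebra.ι ℂ (X i) * UniversalEnvelopingAlgebra.ι ℂ (X j)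
          - UniversalEnvelopingAlgebra.ι ℂ (X j) * UniversalEnvelopingAlgebra.ι ℂ (X i)) ⊗ₜ[ℂ]
          (ι B.toQuadraticMap (X i) * ι B.toQuadraticMap (X j))) = W := by
      simp only [hU, TensorProduct.sum_tmul, ← TensorProduct.smul_tmul']
      rw [hW]
      calc (∑ i : I, ∑ j : I, ∑ k : I,
          B (X k) ⁅X i, X j⁆ • ((UniversalEnvelopingAlgebra.ι ℂ (X k)) ⊗ₜ[ℂ]
            (ι B.toQuadraticMap (X i) * ι B.toQuadraticMap (X j))))
          = ∑ i : I, ∑ k : I, ∑ j : I,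
            B (X k) ⁅X i, X j⁆ • ((UniversalEnvelopingAlgebra.ι ℂ (X k)) ⊗ₜ[ℂ]
              (ι B.toQuadraticMap (X i) * ι B.toQuadraticMap (X j))) :=
            Finset.sum_congr rfl fun i _ => Finset.sum_comm
        _ = ∑ k : I, ∑ i : I, ∑ j : I,
            B (X k) ⁅X i, X j⁆ • ((UniversalEnvelopingAlgebra.ι ℂ (X k)) ⊗ₜ[ℂ]
              (ι B.toQuadraticMap (X i) * ι B.toQuadraticMap (X j))) :=
            Finset.sum_comm
    rw [part1, part2]
    abel
  have hSS' : S * S = Ω ⊗ₜ[ℂ] (1 : CliffordAlgebra B.toQuadraticMap) + (1/2 : ℂ) • W := by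
    have hinj : Function.Injective (fun z : UniversalEnvelopingAlgebra ℂ L ⊗[ℂ]
        CliffordAlgebra B.toQuadraticMap => (2:ℂ) • z) :=
      smul_right_injective _ two_ne_zero
    apply hinj
    simp only
    rw [hSS2, smul_add, smul_smul]
    norm_num
  have expand : D ^ 2 = (S * S) + (S * (1 ⊗ₜ[ℂ] v) + (1 ⊗ₜ[ℂ] v) * S)
      + (1 ⊗ₜ[ℂ] v) * (1 ⊗ₜ[ℂ] v) := by
    rw [hD, ← hS, pow_two]
    noncomm_ring
  rw [expand, hSS', hST, hT2]
  module
end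

section
/- Theorem (Kostant's formula, case 𝔥 = 0). Let (𝔤, B) be a finite-dimensional complex quadratic Lie algebra with orthonormal basis (Xᵢ), v = −(1/12) Σ_{i,j,k} B(Xᵢ,[Xⱼ,Xₖ]) XᵢXⱼXₖ ∈ C(𝔤), D_𝔤 = Σᵢ Xᵢ ⊗ Xᵢ + 1 ⊗ v ∈ U(𝔤) ⊗ C(𝔤), and Ω_𝔤 = Σᵢ Xᵢ² ∈ U(𝔤). Then there exists a constant c_𝔤 ∈ ℂ such that v² = c_𝔤·1 in C(𝔤) and D_𝔤² = Ω_𝔤 ⊗ 1 + c_𝔤·1 in U(𝔤) ⊗ C(𝔤). -/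
open CliffordAlgebra TensorProduct

section KA
variable {L : Type*} [LieRing L] [LieAlgebra ℂ L]
  (B : LinearMap.BilinForm ℂ L)
  {I : Type*} [Fintype I] [DecidableEq I] (X : Module.Basis I ℂ L)

lemma KA.anti (hB_symm : ∀ x y : L, B x y = B y x)
    (hX : ∀ i j, B (X i) (X j) = if i = j then 1 else 0) (i j : I) :
    ι B.toQuadraticMap (X j) * ι B.toQuadraticMap (X i)
      = (if i = j then (2:ℂ) else 0) • (1 : CliffordAlgebra B.toQuadraticMap)
        - ι B.toQuadraticMap (X i) * ι B.toQuadraticMap (X j) := by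
  have h := CliffordAlgebra.ι_mul_ι_add_swap (Q := B.toQuadraticMap) (X i) (X j)
  have hp : QuadraticMap.polar (⇑B.toQuadraticMap) (X i) (X j)
      = (if i = j then (2:ℂ) else 0) := by
    simp only [QuadraticMap.polar, LinearMap.BilinMap.toQuadraticMap_apply, map_add,
      LinearMap.add_apply, hX, hB_symm (X j) (X i)]
    by_cases h : i = j <;> simp [h, eq_comm] <;> ring
  rw [hp, Algebra.algebraMap_eq_smul_one] at h
  linear_combination (norm := noncomm_ring) h
end KA


section KA2
set_option linter.unusedSectionVars false
variable {L : Type*} [LieRing L] [LieAlgebra ℂ L]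
  (B : LinearMap.BilinForm ℂ L)
  {I : Type*} [Fintype I] [DecidableEq I] (X : Module.Basis I ℂ L)

lemma KA.skew2 (x y z : L) : B x ⁅z, y⁆ = - B x ⁅y, z⁆ := by
  rw [(lie_skew z y).symm, map_neg]

lemma KA.skew1 (x y z : L) : B ⁅z, y⁆ x = - B ⁅y, z⁆ x := by
  rw [(lie_skew z y).symm, map_neg, LinearMap.neg_apply]

lemma KA.inv' (hB_inv : ∀ x y z : L, B ⁅x, y⁆ z + B y ⁅x, z⁆ = 0)
    (x y z : L) : B ⁅x, y⁆ z = B x ⁅y, z⁆ := by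
  have h := hB_inv y x z
  rw [KA.skew1] at h
  linear_combination -h

lemma KA.c_swap13 (hB_symm : ∀ x y : L, B x y = B y x)
    (hB_inv : ∀ x y z : L, B ⁅x, y⁆ z + B y ⁅x, z⁆ = 0) (i j k : I) :
    B (X k) ⁅X j, X i⁆ = - B (X i) ⁅X j, X k⁆ := by
  have h := hB_inv (X j) (X i) (X k)
  rw [hB_symm ⁅X j, X i⁆ (X k)] at h
  linear_combination h

lemma KA.c_cyc (hB_symm : ∀ x y : L, B x y = B y x)
    (hB_inv : ∀ x y z : L, B ⁅x, y⁆ z + B y ⁅x, z⁆ = 0) (i j k : I) :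
    B (X k) ⁅X i, X j⁆ = B (X i) ⁅X j, X k⁆ := by
  rw [(lie_skew (X i) (X j)).symm, map_neg,
    KA.c_swap13 B X hB_symm hB_inv, neg_neg]

lemma KA.c_swap12 (hB_symm : ∀ x y : L, B x y = B y x)
    (hB_inv : ∀ x y z : L, B ⁅x, y⁆ z + B y ⁅x, z⁆ = 0) (i j k : I) :
    B (X j) ⁅X i, X k⁆ = - B (X i) ⁅X j, X k⁆ := by
  rw [← KA.c_cyc B X hB_symm hB_inv j i k]
  exact KA.c_swap13 B X hB_symm hB_inv i j k

lemma KA.expand (hX : ∀ i j, B (X i) (X j) = if i = j then 1 else 0) (y : L) :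
    ∑ l : I, B (X l) y • X l = y := by
  have hco : ∀ l, B (X l) y = X.repr y l := by
    intro l
    conv_lhs => rw [← X.sum_repr y]
    simp only [map_sum, map_smul, hX, smul_eq_mul, mul_ite, mul_one, mul_zero, Finset.sum_ite_eq, Finset.mem_univ, if_true]
  simp only [hco]
  exact X.sum_repr y

lemma KA.bianchi (hB_symm : ∀ x y : L, B x y = B y x)
    (hB_inv : ∀ x y z : L, B ⁅x, y⁆ z + B y ⁅x, z⁆ = 0) (j k m n : I) :
    B ⁅X j, X m⁆ ⁅X k, X n⁆
      = B ⁅X j, X k⁆ ⁅X m, X n⁆ + B ⁅X j, X n⁆ ⁅X k, X m⁆ := by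
  rw [KA.inv' B hB_inv, KA.inv' B hB_inv, KA.inv' B hB_inv]
  rw [show ⁅X m, ⁅X k, X n⁆⁆ = ⁅X k, ⁅X m, X n⁆⁆ + ⁅X n, ⁅X k, X m⁆⁆ by
    rw [← lie_skew (X n) ⁅X k, X m⁆, lie_lie]; abel]
  simp

end KA2

namespace KA
section KA3
set_option linter.unusedSectionVars false
variable {L : Type*} [LieRing L] [LieAlgebra ℂ L]
  (B : LinearMap.BilinForm ℂ L)
  {I : Type*} [Fintype I] [DecidableEq I] (X : Module.Basis I ℂ L)

/-- the Clifford generators -/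
noncomputable def a (i : I) : CliffordAlgebra B.toQuadraticMap := ι B.toQuadraticMap (X i)

/-- structure constants -/
noncomputable def cc (i j k : I) : ℂ := B (X i) ⁅X j, X k⁆

/-- 2δ -/
def d (i l : I) : ℂ := if i = l then 2 else 0

/-- the quadratic elements -/
noncomputable def ss (l : I) : CliffordAlgebra B.toQuadraticMap :=
  ∑ j : I, ∑ k : I, cc B X l j k • (a B X j * a B X k)

lemma anti' (hB_symm : ∀ x y : L, B x y = B y x)
    (hX : ∀ i j, B (X i) (X j) = if i = j then 1 else 0) (i l : I) :
    a B X l * a B X i = d i l • 1 - a B X i * a B X l :=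
  KA.anti B X hB_symm hX i l

/-- move `a l` across `a m` inside a product -/
lemma move (hB_symm : ∀ x y : L, B x y = B y x)
    (hX : ∀ i j, B (X i) (X j) = if i = j then 1 else 0) (l m : I)
    (w : CliffordAlgebra B.toQuadraticMap) :
    a B X l * (a B X m * w) = d m l • w - a B X m * (a B X l * w) := by
  rw [← mul_assoc, anti' B X hB_symm hX m l, sub_mul, smul_mul_assoc, one_mul, mul_assoc]

lemma tripanti (hB_symm : ∀ x y : L, B x y = B y x)
    (hX : ∀ i j, B (X i) (X j) = if i = j then 1 else 0) (l i j k : I) :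
    a B X l * (a B X i * (a B X j * a B X k))
        + a B X i * (a B X j * (a B X k * a B X l))
      = d i l • (a B X j * a B X k) - d j l • (a B X i * a B X k)
        + d k l • (a B X i * a B X j) := by
  rw [move B X hB_symm hX l i, move B X hB_symm hX l j, anti' B X hB_symm hX k l]
  simp only [mul_sub, sub_mul, mul_smul_comm, smul_mul_assoc, mul_one, mul_assoc, smul_sub]
  abel

end KA3
end KA

namespace KA
section KA4
set_option linter.unusedSectionVars false
variable {L : Type*} [LieRing L] [LieAlgebra ℂ L]
  (B : LinearMap.BilinForm ℂ L)
  {I : Type*} [Fintype I] [DecidableEq I] (X : Module.Basis I ℂ L)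

lemma sw12 {M : Type*} [AddCommMonoid M] (g : I → I → I → M) :
    (∑ i : I, ∑ j : I, ∑ k : I, g i j k) = ∑ i : I, ∑ j : I, ∑ k : I, g j i k :=
  Finset.sum_comm

lemma sw23 {M : Type*} [AddCommMonoid M] (g : I → I → I → M) :
    (∑ i : I, ∑ j : I, ∑ k : I, g i j k) = ∑ i : I, ∑ j : I, ∑ k : I, g i k j :=
  Finset.sum_congr rfl fun _ _ => Finset.sum_comm

/-- bring the first index innermost -/
lemma rot3 {M : Type*} [AddCommMonoid M] (g : I → I → I → M) :
    (∑ i : I, ∑ j : I, ∑ k : I, g i j k) = ∑ j : I, ∑ k : I, ∑ i : I, g i j k := by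
  rw [sw12]; exact Finset.sum_congr rfl fun _ _ => Finset.sum_comm

lemma collapse (l : I) (r : I → ℂ) : (∑ i : I, r i * d i l) = 2 * r l := by
  simp [d, mul_ite, mul_comm]

lemma collapseM {M : Type*} [AddCommMonoid M] [Module ℂ M] (l : I) (r : I → ℂ) (w : M) :
    (∑ i : I, (r i * d i l) • w) = (2 * r l) • w := by
  rw [← Finset.sum_smul, collapse]

/-- the cubic element -/
noncomputable def vv : CliffordAlgebra B.toQuadraticMap :=
  (-(1/12 : ℂ)) • ∑ i : I, ∑ j : I, ∑ k : I,
    cc B X i j k • (a B X i * a B X j * a B X k)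

lemma acomm_v (hB_symm : ∀ x y : L, B x y = B y x)
    (hB_inv : ∀ x y z : L, B ⁅x, y⁆ z + B y ⁅x, z⁆ = 0)
    (hX : ∀ i j, B (X i) (X j) = if i = j then 1 else 0) (l : I) :
    a B X l * vv B X + vv B X * a B X l = (-(1/2 : ℂ)) • ss B X l := by
  rw [vv, mul_smul_comm, smul_mul_assoc, ← smul_add]
  have key : (a B X l * ∑ i : I, ∑ j : I, ∑ k : I,
        cc B X i j k • (a B X i * a B X j * a B X k))
      + (∑ i : I, ∑ j : I, ∑ k : I,
        cc B X i j k • (a B X i * a B X j * a B X k)) * a B X l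
      = (6 : ℂ) • ss B X l := by
    simp only [Finset.mul_sum, Finset.sum_mul, ← Finset.sum_add_distrib]
    have point : ∀ i j k : I,
        a B X l * (cc B X i j k • (a B X i * a B X j * a B X k))
          + (cc B X i j k • (a B X i * a B X j * a B X k)) * a B X l
        = (cc B X i j k * d i l) • (a B X j * a B X k)
          - (cc B X i j k * d j l) • (a B X i * a B X k)
          + (cc B X i j k * d k l) • (a B X i * a B X j) := by
      intro i j k
      rw [mul_smul_comm, smul_mul_assoc, ← smul_add]
      simp only [mul_assoc]
      rw [tripanti B X hB_symm hX l i j k]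
      simp only [smul_add, smul_sub, smul_smul]
    simp only [point]
    simp only [Finset.sum_add_distrib, Finset.sum_sub_distrib]
    rw [rot3 (fun i j k => (cc B X i j k * d i l) • (a B X j * a B X k)),
      sw23 (fun i j k => (cc B X i j k * d j l) • (a B X i * a B X k))]
    simp only [collapseM]
    have e1 : (∑ j : I, ∑ k : I, (2 * cc B X l j k) • (a B X j * a B X k))
        = (2:ℂ) • ss B X l := by
      simp only [ss, mul_smul, Finset.smul_sum]
    have e2 : (∑ i : I, ∑ j : I, (2 * cc B X i l j) • (a B X i * a B X j))
        = (-2:ℂ) • ss B X l := by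
      have h2 : ∀ i j : I, cc B X i l j = - cc B X l i j := fun i j =>
        KA.c_swap12 B X hB_symm hB_inv l i j
      simp only [h2, ss, mul_neg, neg_smul, Finset.sum_neg_distrib, mul_smul,
        Finset.smul_sum, smul_neg]
    have e3 : (∑ i : I, ∑ j : I, (2 * cc B X i j l) • (a B X i * a B X j))
        = (2:ℂ) • ss B X l := by
      have : ∀ i j : I, cc B X i j l = cc B X l i j := fun i j =>
        (KA.c_cyc B X hB_symm hB_inv i j l).symm
      simp only [this, ss, mul_smul, Finset.smul_sum]
    rw [e1, e2, e3]
    module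
  rw [key, smul_smul]
  norm_num
end KA4
end KA

namespace KA
section KA5
set_option linter.unusedSectionVars false
variable {L : Type*} [LieRing L] [LieAlgebra ℂ L]
  (B : LinearMap.BilinForm ℂ L)
  {I : Type*} [Fintype I] [DecidableEq I] (X : Module.Basis I ℂ L)

/-- contracted product of structure constants -/
noncomputable def T (j k m n : I) : ℂ := ∑ l : I, cc B X l j k * cc B X l m n

noncomputable def kap : ℂ := ∑ j : I, ∑ k : I, ∑ l : I, cc B X l j k * cc B X l j k

lemma Teq (hX : ∀ i j, B (X i) (X j) = if i = j then 1 else 0) (j k m n : I) :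
    T B X j k m n = B ⁅X j, X k⁆ ⁅X m, X n⁆ := by
  conv_rhs => rw [show ⁅X j, X k⁆ = ∑ l : I, B (X l) ⁅X j, X k⁆ • X l from
    (KA.expand B X hX _).symm]
  rw [map_sum, LinearMap.sum_apply]
  exact Finset.sum_congr rfl fun l _ => by simp [cc, smul_eq_mul]

lemma Tskew2 (hX : ∀ i j, B (X i) (X j) = if i = j then 1 else 0) (j k m n : I) :
    T B X j k n m = - T B X j k m n := by
  rw [Teq B X hX, Teq B X hX]; exact KA.skew2 B _ _ _

lemma Tskew1 (hX : ∀ i j, B (X i) (X j) = if i = j then 1 else 0) (j k m n : I) :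
    T B X k j m n = - T B X j k m n := by
  rw [Teq B X hX, Teq B X hX]; exact KA.skew1 B _ _ _

lemma Tsymm (hB_symm : ∀ x y : L, B x y = B y x)
    (hX : ∀ i j, B (X i) (X j) = if i = j then 1 else 0) (j k m n : I) :
    T B X m n j k = T B X j k m n := by
  rw [Teq B X hX, Teq B X hX]; exact hB_symm _ _

lemma Tbianchi (hB_symm : ∀ x y : L, B x y = B y x)
    (hB_inv : ∀ x y z : L, B ⁅x, y⁆ z + B y ⁅x, z⁆ = 0)
    (hX : ∀ i j, B (X i) (X j) = if i = j then 1 else 0) (j k m n : I) :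
    T B X j m k n = T B X j k m n + T B X j n k m := by
  rw [Teq B X hX, Teq B X hX, Teq B X hX]
  exact KA.bianchi B X hB_symm hB_inv j k m n

lemma d_symm (i l : I) : d i l = d l i := by simp [d, eq_comm]

/-- symmetric collapse -/
lemma symm_collapse (hB_symm : ∀ x y : L, B x y = B y x)
    (hX : ∀ i j, B (X i) (X j) = if i = j then 1 else 0)
    (K : I → I → ℂ) (hK : ∀ p q, K p q = K q p) :
    (∑ p : I, ∑ q : I, K p q • (a B X p * a B X q))
      = (∑ p : I, K p p) • (1 : CliffordAlgebra B.toQuadraticMap) := by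
  have h2 : (2:ℂ) • (∑ p : I, ∑ q : I, K p q • (a B X p * a B X q))
      = (2:ℂ) • ((∑ p : I, K p p) • (1 : CliffordAlgebra B.toQuadraticMap)) := by
    have swap : (∑ p : I, ∑ q : I, K p q • (a B X p * a B X q))
        = ∑ p : I, ∑ q : I, K p q • (d p q • (1 : CliffordAlgebra B.toQuadraticMap)
            - a B X p * a B X q) := by
      rw [Finset.sum_comm]
      exact Finset.sum_congr rfl fun x _ => Finset.sum_congr rfl fun y _ => by
        rw [hK y x, anti' B X hB_symm hX x y]
    rw [two_smul, two_smul]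
    nth_rewrite 2 [swap]
    simp only [smul_sub, smul_smul]
    have coll : ∀ p : I, (∑ q : I, (K p q * d p q) • (1 : CliffordAlgebra B.toQuadraticMap))
        = (2 * K p p) • 1 := fun p => by
      rw [← Finset.sum_smul]
      congr 1
      have hd : ∀ q : I, K p q * d p q = K p q * d q p := fun q => by rw [d_symm]
      simp only [hd]
      exact collapse p (fun q => K p q)
    simp only [Finset.sum_sub_distrib, coll]
    rw [← Finset.sum_smul, ← Finset.mul_sum]
    rw [show ((2 * ∑ p : I, K p p) • (1 : CliffordAlgebra B.toQuadraticMap))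
      = (∑ p : I, K p p) • 1 + (∑ p : I, K p p) • 1 by rw [two_mul, add_smul]]
    abel
  exact smul_right_injective _ (by norm_num : (2:ℂ) ≠ 0) h2

lemma push_in4 {M : Type*} [AddCommMonoid M] (F : I → I → I → I → I → M) :
    (∑ l : I, ∑ j : I, ∑ k : I, ∑ m : I, ∑ n : I, F l j k m n)
      = ∑ j : I, ∑ k : I, ∑ m : I, ∑ n : I, ∑ l : I, F l j k m n := by
  rw [Finset.sum_comm]
  refine Finset.sum_congr rfl fun j _ => ?_
  rw [Finset.sum_comm]
  refine Finset.sum_congr rfl fun k _ => ?_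
  rw [Finset.sum_comm]
  refine Finset.sum_congr rfl fun m _ => ?_
  rw [Finset.sum_comm]

end KA5
end KA


namespace KA
section KA7
set_option linter.unusedSectionVars false
set_option maxHeartbeats 1000000
variable {L : Type*} [LieRing L] [LieAlgebra ℂ L]
  (B : LinearMap.BilinForm ℂ L)
  {I : Type*} [Fintype I] [DecidableEq I] (X : Module.Basis I ℂ L)

lemma ss_sq_expand :
    (∑ l : I, ss B X l * ss B X l)
      = ∑ j : I, ∑ k : I, ∑ m : I, ∑ n : I,
          T B X j k m n • (a B X j * (a B X k * (a B X m * a B X n))) := by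
  have h1 : ∀ l : I, ss B X l * ss B X l
      = ∑ j : I, ∑ k : I, ∑ m : I, ∑ n : I,
          (cc B X l j k * cc B X l m n) • (a B X j * (a B X k * (a B X m * a B X n))) := by
    intro l
    rw [ss, Finset.sum_mul]
    refine Finset.sum_congr rfl fun j _ => ?_
    rw [Finset.sum_mul]
    refine Finset.sum_congr rfl fun k _ => ?_
    rw [smul_mul_assoc, Finset.mul_sum, Finset.smul_sum]
    refine Finset.sum_congr rfl fun m _ => ?_
    rw [Finset.mul_sum, Finset.smul_sum]
    refine Finset.sum_congr rfl fun n _ => ?_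
    rw [mul_smul_comm, smul_smul, mul_assoc]
  simp only [h1]
  rw [push_in4 (fun l j k m n => (cc B X l j k * cc B X l m n)
    • (a B X j * (a B X k * (a B X m * a B X n))))]
  simp only [← Finset.sum_smul]
  rfl

lemma WWval (hB_symm : ∀ x y : L, B x y = B y x)
    (hX : ∀ i j, B (X i) (X j) = if i = j then 1 else 0) :
    (∑ j : I, ∑ k : I, ∑ n : I, T B X j k k n • (a B X j * a B X n))
      = (- kap B X) • 1 := by
  have hmerge : ∀ j : I, (∑ k : I, ∑ n : I, T B X j k k n • (a B X j * a B X n))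
      = ∑ n : I, (∑ k : I, T B X j k k n) • (a B X j * a B X n) := by
    intro j
    rw [Finset.sum_comm]
    exact Finset.sum_congr rfl fun n _ => (Finset.sum_smul).symm
  simp only [hmerge]
  rw [symm_collapse B X hB_symm hX (fun j n => ∑ k : I, T B X j k k n)
    (fun p q => Finset.sum_congr rfl fun k _ => by
      rw [Teq B X hX, Teq B X hX, hB_symm ⁅X p, X k⁆ ⁅X k, X q⁆,
        KA.skew1 B _ _ _, KA.skew2 B _ _ _]
      simp)]
  congr 1
  rw [kap]
  rw [show (∑ p : I, ∑ k : I, T B X p k k p)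
      = ∑ p : I, ∑ k : I, ∑ l : I, cc B X l p k * cc B X l k p from
    Finset.sum_congr rfl fun p _ => Finset.sum_congr rfl fun k _ => rfl]
  rw [← Finset.sum_neg_distrib]
  refine Finset.sum_congr rfl fun p _ => ?_
  rw [← Finset.sum_neg_distrib]
  refine Finset.sum_congr rfl fun k _ => ?_
  rw [← Finset.sum_neg_distrib]
  refine Finset.sum_congr rfl fun l _ => ?_
  have hc : cc B X l k p = - cc B X l p k := by
    rw [cc, cc, KA.skew2 B _ _ _]
  rw [hc]; ring

lemma Ze1 (hB_symm : ∀ x y : L, B x y = B y x)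
    (hX : ∀ i j, B (X i) (X j) = if i = j then 1 else 0) :
    (∑ j : I, ∑ k : I, ∑ m : I, ∑ n : I,
        T B X j k m n • (a B X j * (a B X k * (a B X m * a B X n))))
      = (2:ℂ) • (∑ j : I, ∑ k : I, ∑ n : I,
          T B X j k k n • (a B X j * a B X n))
        - ∑ j : I, ∑ k : I, ∑ m : I, ∑ n : I,
            T B X j k m n • (a B X j * (a B X m * (a B X k * a B X n))) := by
  have point1 : ∀ j k m n : I,
      T B X j k m n • (a B X j * (a B X k * (a B X m * a B X n)))
        = (T B X j k m n * d m k) • (a B X j * a B X n)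
          - T B X j k m n • (a B X j * (a B X m * (a B X k * a B X n))) := by
    intro j k m n
    rw [move B X hB_symm hX k m (a B X n), mul_sub, mul_smul_comm, smul_sub, smul_smul]
  calc (∑ j : I, ∑ k : I, ∑ m : I, ∑ n : I,
        T B X j k m n • (a B X j * (a B X k * (a B X m * a B X n))))
      = ∑ j : I, ∑ k : I, ∑ m : I, ∑ n : I,
          ((T B X j k m n * d m k) • (a B X j * a B X n)
            - T B X j k m n • (a B X j * (a B X m * (a B X k * a B X n)))) :=
        Finset.sum_congr rfl fun j _ => Finset.sum_congr rfl fun k _ =>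
          Finset.sum_congr rfl fun m _ => Finset.sum_congr rfl fun n _ => point1 j k m n
    _ = (∑ j : I, ∑ k : I, ∑ m : I, ∑ n : I,
          (T B X j k m n * d m k) • (a B X j * a B X n))
        - ∑ j : I, ∑ k : I, ∑ m : I, ∑ n : I,
            T B X j k m n • (a B X j * (a B X m * (a B X k * a B X n))) := by
        simp only [Finset.sum_sub_distrib]
  congr 1
  have inner : ∀ j k : I, (∑ m : I, ∑ n : I,
      (T B X j k m n * d m k) • (a B X j * a B X n))
      = ∑ n : I, (2 * T B X j k k n) • (a B X j * a B X n) := by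
    intro j k
    rw [Finset.sum_comm]
    exact Finset.sum_congr rfl fun n _ =>
      collapseM k (fun m => T B X j k m n) (a B X j * a B X n)
  calc (∑ j : I, ∑ k : I, ∑ m : I, ∑ n : I,
        (T B X j k m n * d m k) • (a B X j * a B X n))
      = ∑ j : I, ∑ k : I, ∑ n : I, (2 * T B X j k k n) • (a B X j * a B X n) :=
        Finset.sum_congr rfl fun j _ => Finset.sum_congr rfl fun k _ => inner j k
    _ = (2:ℂ) • ∑ j : I, ∑ k : I, ∑ n : I, T B X j k k n • (a B X j * a B X n) := by
        simp only [mul_smul, ← Finset.smul_sum]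

lemma Ze2 (hB_symm : ∀ x y : L, B x y = B y x)
    (hB_inv : ∀ x y z : L, B ⁅x, y⁆ z + B y ⁅x, z⁆ = 0)
    (hX : ∀ i j, B (X i) (X j) = if i = j then 1 else 0) :
    (∑ j : I, ∑ k : I, ∑ m : I, ∑ n : I,
        T B X j k m n • (a B X j * (a B X m * (a B X k * a B X n))))
      = (∑ j : I, ∑ k : I, ∑ m : I, ∑ n : I,
          T B X j k m n • (a B X j * (a B X k * (a B X m * a B X n))))
        + ∑ j : I, ∑ k : I, ∑ m : I, ∑ n : I,
            T B X j n k m • (a B X j * (a B X k * (a B X m * a B X n))) := by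
  calc (∑ j : I, ∑ k : I, ∑ m : I, ∑ n : I,
        T B X j k m n • (a B X j * (a B X m * (a B X k * a B X n))))
      = ∑ j : I, ∑ k : I, ∑ m : I, ∑ n : I,
          T B X j m k n • (a B X j * (a B X k * (a B X m * a B X n))) :=
        Finset.sum_congr rfl fun j _ =>
          sw12 (fun k m n => T B X j k m n • (a B X j * (a B X m * (a B X k * a B X n))))
    _ = ∑ j : I, ∑ k : I, ∑ m : I, ∑ n : I,
          (T B X j k m n • (a B X j * (a B X k * (a B X m * a B X n)))
            + T B X j n k m • (a B X j * (a B X k * (a B X m * a B X n)))) :=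
        Finset.sum_congr rfl fun j _ => Finset.sum_congr rfl fun k _ =>
          Finset.sum_congr rfl fun m _ => Finset.sum_congr rfl fun n _ => by
            rw [Tbianchi B X hB_symm hB_inv hX j k m n, add_smul]
    _ = _ := by simp only [Finset.sum_add_distrib]

lemma Ze3 (hB_symm : ∀ x y : L, B x y = B y x)
    (hX : ∀ i j, B (X i) (X j) = if i = j then 1 else 0) :
    (∑ j : I, ∑ k : I, ∑ m : I, ∑ n : I,
        T B X j n k m • (a B X j * (a B X k * (a B X m * a B X n))))
      = (∑ j : I, ∑ k : I, ∑ m : I, ∑ n : I,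
          T B X j k m n • (a B X j * (a B X k * (a B X m * a B X n))))
        - (4:ℂ) • (∑ j : I, ∑ k : I, ∑ n : I,
            T B X j k k n • (a B X j * a B X n)) := by
  have point3 : ∀ j k m n : I,
      T B X j k m n • (a B X j * (a B X m * (a B X n * a B X k)))
        = (T B X j k m n * d k n) • (a B X j * a B X m)
          - (T B X j k m n * d k m) • (a B X j * a B X n)
          + T B X j k m n • (a B X j * (a B X k * (a B X m * a B X n))) := by
    intro j k m n
    rw [anti' B X hB_symm hX k n, mul_sub, mul_smul_comm, mul_one,
      move B X hB_symm hX m k (a B X n)]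
    rw [show a B X j * (d k n • a B X m
          - (d k m • a B X n - a B X k * (a B X m * a B X n)))
        = d k n • (a B X j * a B X m) - d k m • (a B X j * a B X n)
          + a B X j * (a B X k * (a B X m * a B X n)) by
      simp only [mul_sub, mul_add, mul_smul_comm]; abel]
    simp only [smul_add, smul_sub, smul_smul]
  have innerP1 : ∀ j k : I, (∑ m : I, ∑ n : I,
      (T B X j k m n * d k n) • (a B X j * a B X m))
      = ∑ m : I, (-2 * T B X j k k m) • (a B X j * a B X m) := by
    intro j k
    refine Finset.sum_congr rfl fun m _ => ?_
    have hd : ∀ n : I, T B X j k m n * d k n = T B X j k m n * d n k := fun n => by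
      rw [d_symm]
    simp only [hd]
    rw [collapseM k (fun n => T B X j k m n) (a B X j * a B X m),
      Tskew2 B X hX j k k m]
    ring_nf
  have innerP2 : ∀ j k : I, (∑ m : I, ∑ n : I,
      (T B X j k m n * d k m) • (a B X j * a B X n))
      = ∑ n : I, (2 * T B X j k k n) • (a B X j * a B X n) := by
    intro j k
    rw [Finset.sum_comm]
    refine Finset.sum_congr rfl fun n _ => ?_
    have hd : ∀ m : I, T B X j k m n * d k m = T B X j k m n * d m k := fun m => by
      rw [d_symm]
    simp only [hd]
    exact collapseM k (fun m => T B X j k m n) (a B X j * a B X n)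
  calc (∑ j : I, ∑ k : I, ∑ m : I, ∑ n : I,
        T B X j n k m • (a B X j * (a B X k * (a B X m * a B X n))))
      = ∑ j : I, ∑ k : I, ∑ m : I, ∑ n : I,
          T B X j k m n • (a B X j * (a B X m * (a B X n * a B X k))) :=
        Finset.sum_congr rfl fun j _ =>
          (rot3 (fun k m n =>
            T B X j k m n • (a B X j * (a B X m * (a B X n * a B X k))))).symm
    _ = ∑ j : I, ∑ k : I, ∑ m : I, ∑ n : I,
          ((T B X j k m n * d k n) • (a B X j * a B X m)
            - (T B X j k m n * d k m) • (a B X j * a B X n)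
            + T B X j k m n • (a B X j * (a B X k * (a B X m * a B X n)))) :=
        Finset.sum_congr rfl fun j _ => Finset.sum_congr rfl fun k _ =>
          Finset.sum_congr rfl fun m _ => Finset.sum_congr rfl fun n _ => point3 j k m n
    _ = ((∑ j : I, ∑ k : I, ∑ m : I, ∑ n : I,
            (T B X j k m n * d k n) • (a B X j * a B X m))
          - ∑ j : I, ∑ k : I, ∑ m : I, ∑ n : I,
              (T B X j k m n * d k m) • (a B X j * a B X n))
        + ∑ j : I, ∑ k : I, ∑ m : I, ∑ n : I,
            T B X j k m n • (a B X j * (a B X k * (a B X m * a B X n))) := by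
        simp only [Finset.sum_add_distrib, Finset.sum_sub_distrib]
    _ = (((-2:ℂ) • ∑ j : I, ∑ k : I, ∑ m : I,
            T B X j k k m • (a B X j * a B X m))
          - (2:ℂ) • ∑ j : I, ∑ k : I, ∑ n : I,
              T B X j k k n • (a B X j * a B X n))
        + ∑ j : I, ∑ k : I, ∑ m : I, ∑ n : I,
            T B X j k m n • (a B X j * (a B X k * (a B X m * a B X n))) := by
        congr 1
        congr 1
        · calc (∑ j : I, ∑ k : I, ∑ m : I, ∑ n : I,
                (T B X j k m n * d k n) • (a B X j * a B X m))
              = ∑ j : I, ∑ k : I, ∑ m : I, (-2 * T B X j k k m) • (a B X j * a B X m) :=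
                Finset.sum_congr rfl fun j _ => Finset.sum_congr rfl fun k _ => innerP1 j k
            _ = _ := by simp only [mul_smul, ← Finset.smul_sum]
        · calc (∑ j : I, ∑ k : I, ∑ m : I, ∑ n : I,
                (T B X j k m n * d k m) • (a B X j * a B X n))
              = ∑ j : I, ∑ k : I, ∑ n : I, (2 * T B X j k k n) • (a B X j * a B X n) :=
                Finset.sum_congr rfl fun j _ => Finset.sum_congr rfl fun k _ => innerP2 j k
            _ = _ := by simp only [mul_smul, ← Finset.smul_sum]
    _ = _ := by module

lemma Zval (hB_symm : ∀ x y : L, B x y = B y x)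
    (hB_inv : ∀ x y z : L, B ⁅x, y⁆ z + B y ⁅x, z⁆ = 0)
    (hX : ∀ i j, B (X i) (X j) = if i = j then 1 else 0) :
    (∑ j : I, ∑ k : I, ∑ m : I, ∑ n : I,
        T B X j k m n • (a B X j * (a B X k * (a B X m * a B X n))))
      = (-2 * kap B X) • 1 := by
  have e1 := Ze1 B X hB_symm hX
  have e2 := Ze2 B X hB_symm hB_inv hX
  have e3 := Ze3 B X hB_symm hX
  have hW := WWval B X hB_symm hX
  rw [e3] at e2
  rw [e2] at e1
  have h4 := eq_sub_iff_add_eq.mp e1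
  have h5 : (3:ℂ) • (∑ j : I, ∑ k : I, ∑ m : I, ∑ n : I,
      T B X j k m n • (a B X j * (a B X k * (a B X m * a B X n))))
      = (3:ℂ) • ((-2 * kap B X)
          • (1 : CliffordAlgebra B.toQuadraticMap)) := by
    have expand : (3:ℂ) • (∑ j : I, ∑ k : I, ∑ m : I, ∑ n : I,
        T B X j k m n • (a B X j * (a B X k * (a B X m * a B X n))))
        = ((∑ j : I, ∑ k : I, ∑ m : I, ∑ n : I,
            T B X j k m n • (a B X j * (a B X k * (a B X m * a B X n))))
          + ((∑ j : I, ∑ k : I, ∑ m : I, ∑ n : I,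
              T B X j k m n • (a B X j * (a B X k * (a B X m * a B X n))))
            + ((∑ j : I, ∑ k : I, ∑ m : I, ∑ n : I,
                T B X j k m n • (a B X j * (a B X k * (a B X m * a B X n))))
              - (4:ℂ) • (∑ j : I, ∑ k : I, ∑ n : I,
                  T B X j k k n • (a B X j * a B X n)))))
          + (4:ℂ) • (∑ j : I, ∑ k : I, ∑ n : I,
              T B X j k k n • (a B X j * a B X n)) := by module
    rw [expand, h4, hW]
    module
  exact smul_right_injective _ (by norm_num : (3:ℂ) ≠ 0) h5
end KA7
end KA


namespace KA
section KA8
set_option linter.unusedSectionVars false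
set_option maxHeartbeats 1000000
variable {L : Type*} [LieRing L] [LieAlgebra ℂ L]
  (B : LinearMap.BilinForm ℂ L)
  {I : Type*} [Fintype I] [DecidableEq I] (X : Module.Basis I ℂ L)

lemma scalar_pull3 {M : Type*} [AddCommMonoid M] [Module ℂ M] (r : ℂ)
    (g : I → I → I → ℂ) (y : I → I → I → M) :
    (∑ i : I, ∑ j : I, ∑ k : I, (g i j k * r) • y i j k)
      = r • ∑ i : I, ∑ j : I, ∑ k : I, g i j k • y i j k := by
  rw [Finset.smul_sum]
  refine Finset.sum_congr rfl fun i _ => ?_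
  rw [Finset.smul_sum]
  refine Finset.sum_congr rfl fun j _ => ?_
  rw [Finset.smul_sum]
  refine Finset.sum_congr rfl fun k _ => ?_
  rw [smul_smul, mul_comm]

lemma hSV : ((-12:ℂ) • vv B X)
    = ∑ l : I, ∑ m : I, ∑ n : I, cc B X l m n • (a B X l * (a B X m * a B X n)) := by
  rw [vv, smul_smul]
  norm_num
  exact Finset.sum_congr rfl fun l _ => Finset.sum_congr rfl fun m _ =>
    Finset.sum_congr rfl fun n _ => by rw [mul_assoc]

lemma hval (hB_symm : ∀ x y : L, B x y = B y x)
    (hB_inv : ∀ x y z : L, B ⁅x, y⁆ z + B y ⁅x, z⁆ = 0)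
    (hX : ∀ i j, B (X i) (X j) = if i = j then 1 else 0) (l : I) :
    vv B X * a B X l = (-(1/2:ℂ)) • ss B X l - a B X l * vv B X := by
  have h := acomm_v B X hB_symm hB_inv hX l
  exact eq_sub_of_add_eq (by rw [add_comm]; exact h)

lemma pointpush (hB_symm : ∀ x y : L, B x y = B y x)
    (hB_inv : ∀ x y z : L, B ⁅x, y⁆ z + B y ⁅x, z⁆ = 0)
    (hX : ∀ i j, B (X i) (X j) = if i = j then 1 else 0) (l m n : I) :
    vv B X * (a B X l * (a B X m * a B X n))
      = -(a B X l * (a B X m * (a B X n * vv B X)))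
        - (1/2:ℂ) • (ss B X l * (a B X m * a B X n))
        + (1/2:ℂ) • (a B X l * (ss B X m * a B X n))
        - (1/2:ℂ) • (a B X l * (a B X m * ss B X n)) := by
  calc vv B X * (a B X l * (a B X m * a B X n))
      = (vv B X * a B X l) * (a B X m * a B X n) := (mul_assoc _ _ _).symm
    _ = ((-(1/2:ℂ)) • ss B X l - a B X l * vv B X) * (a B X m * a B X n) := by
        rw [hval B X hB_symm hB_inv hX l]
    _ = (-(1/2:ℂ)) • (ss B X l * (a B X m * a B X n))
        - a B X l * ((vv B X * a B X m) * a B X n) := by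
        simp only [sub_mul, smul_mul_assoc, mul_assoc]
    _ = (-(1/2:ℂ)) • (ss B X l * (a B X m * a B X n))
        - a B X l * (((-(1/2:ℂ)) • ss B X m - a B X m * vv B X) * a B X n) := by
        rw [hval B X hB_symm hB_inv hX m]
    _ = (-(1/2:ℂ)) • (ss B X l * (a B X m * a B X n))
        - (-(1/2:ℂ)) • (a B X l * (ss B X m * a B X n))
        + a B X l * (a B X m * (vv B X * a B X n)) := by
        simp only [sub_mul, smul_mul_assoc, mul_sub, mul_smul_comm, mul_assoc]
        abel
    _ = (-(1/2:ℂ)) • (ss B X l * (a B X m * a B X n))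
        - (-(1/2:ℂ)) • (a B X l * (ss B X m * a B X n))
        + a B X l * (a B X m * ((-(1/2:ℂ)) • ss B X n - a B X n * vv B X)) := by
        rw [hval B X hB_symm hB_inv hX n]
    _ = _ := by
        simp only [mul_sub, mul_neg, mul_smul_comm, neg_smul]
        module

lemma I2val :
    (∑ l : I, ∑ m : I, ∑ n : I, cc B X l m n • (ss B X l * (a B X m * a B X n)))
      = ∑ l : I, ss B X l * ss B X l := by
  refine Finset.sum_congr rfl fun l _ => ?_
  nth_rewrite 3 [ss]
  rw [Finset.mul_sum]
  refine Finset.sum_congr rfl fun m _ => ?_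
  rw [Finset.mul_sum]
  refine Finset.sum_congr rfl fun n _ => ?_
  rw [mul_smul_comm]

lemma I3val (hB_symm : ∀ x y : L, B x y = B y x)
    (hB_inv : ∀ x y z : L, B ⁅x, y⁆ z + B y ⁅x, z⁆ = 0) :
    (∑ l : I, ∑ m : I, ∑ n : I, cc B X l m n • (a B X l * (a B X m * ss B X n)))
      = ∑ l : I, ss B X l * ss B X l := by
  rw [(rot3 (fun n l m => cc B X l m n • (a B X l * (a B X m * ss B X n)))).symm]
  refine Finset.sum_congr rfl fun n _ => ?_
  have step : (∑ l : I, ∑ m : I, cc B X l m n • (a B X l * (a B X m * ss B X n)))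
      = (∑ l : I, ∑ m : I, cc B X l m n • (a B X l * a B X m)) * ss B X n := by
    rw [Finset.sum_mul]
    refine Finset.sum_congr rfl fun l _ => ?_
    rw [Finset.sum_mul]
    refine Finset.sum_congr rfl fun m _ => ?_
    rw [smul_mul_assoc, mul_assoc]
  rw [step]
  congr 1
  rw [ss]
  refine Finset.sum_congr rfl fun l _ => Finset.sum_congr rfl fun m _ => ?_
  rw [show cc B X l m n = cc B X n l m from (KA.c_cyc B X hB_symm hB_inv l m n).symm]

lemma scomm (hB_symm : ∀ x y : L, B x y = B y x)
    (hX : ∀ i j, B (X i) (X j) = if i = j then 1 else 0) (m n : I) :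
    ss B X m * a B X n
      = a B X n * ss B X m + ∑ p : I, (-4 * cc B X m n p) • a B X p := by
  have point : ∀ j k : I, (a B X j * a B X k) * a B X n
      = (d k n • a B X j - d j n • a B X k) + a B X n * (a B X j * a B X k) := by
    intro j k
    rw [mul_assoc, anti' B X hB_symm hX n k, mul_sub, mul_smul_comm, mul_one,
      move B X hB_symm hX j n (a B X k), d_symm n k, d_symm n j]
    abel
  calc ss B X m * a B X n
      = ∑ j : I, ∑ k : I, cc B X m j k
          • ((d k n • a B X j - d j n • a B X k) + a B X n * (a B X j * a B X k)) := by
        rw [ss, Finset.sum_mul]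
        refine Finset.sum_congr rfl fun j _ => ?_
        rw [Finset.sum_mul]
        refine Finset.sum_congr rfl fun k _ => ?_
        rw [smul_mul_assoc, point j k]
    _ = ((∑ j : I, ∑ k : I, (cc B X m j k * d k n) • a B X j)
          - ∑ j : I, ∑ k : I, (cc B X m j k * d j n) • a B X k)
        + ∑ j : I, ∑ k : I, cc B X m j k • (a B X n * (a B X j * a B X k)) := by
        simp only [smul_add, smul_sub, smul_smul, Finset.sum_add_distrib,
          Finset.sum_sub_distrib]
    _ = ((∑ p : I, (-2 * cc B X m n p) • a B X p)
          - ∑ p : I, (2 * cc B X m n p) • a B X p)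
        + a B X n * ss B X m := by
        congr 1
        congr 1
        · refine Finset.sum_congr rfl fun j _ => ?_
          rw [collapseM n (fun k => cc B X m j k) (a B X j)]
          rw [show cc B X m j n = - cc B X m n j from by
            rw [cc, cc, KA.skew2 B _ _ _]]
          rw [show 2 * - cc B X m n j = -2 * cc B X m n j by ring]
        · rw [Finset.sum_comm]
          refine Finset.sum_congr rfl fun k _ => ?_
          exact collapseM n (fun j => cc B X m j k) (a B X k)
        · conv_rhs => rw [ss]
          rw [Finset.mul_sum]
          refine Finset.sum_congr rfl fun j _ => ?_
          rw [Finset.mul_sum]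
          refine Finset.sum_congr rfl fun k _ => ?_
          rw [mul_smul_comm]
    _ = _ := by
        rw [← Finset.sum_sub_distrib]
        rw [add_comm]
        congr 1
        refine Finset.sum_congr rfl fun p _ => ?_
        rw [← sub_smul]
        congr 1
        ring

lemma I4val (hB_symm : ∀ x y : L, B x y = B y x)
    (hB_inv : ∀ x y z : L, B ⁅x, y⁆ z + B y ⁅x, z⁆ = 0)
    (hX : ∀ i j, B (X i) (X j) = if i = j then 1 else 0) :
    (∑ l : I, ∑ m : I, ∑ n : I, cc B X l m n • (a B X l * (ss B X m * a B X n)))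
      = -(∑ l : I, ss B X l * ss B X l) + (-4 * kap B X) • 1 := by
  calc (∑ l : I, ∑ m : I, ∑ n : I, cc B X l m n • (a B X l * (ss B X m * a B X n)))
      = ∑ l : I, ∑ m : I, ∑ n : I, cc B X l m n
          • (a B X l * (a B X n * ss B X m)
            + ∑ p : I, (-4 * cc B X m n p) • (a B X l * a B X p)) := by
        refine Finset.sum_congr rfl fun l _ => Finset.sum_congr rfl fun m _ =>
          Finset.sum_congr rfl fun n _ => ?_
        rw [scomm B X hB_symm hX m n, mul_add, Finset.mul_sum,
          show (∑ i : I, a B X l * ((-4 * cc B X m n i) • a B X i))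
            = ∑ p : I, (-4 * cc B X m n p) • (a B X l * a B X p) from
          Finset.sum_congr rfl fun p _ => mul_smul_comm _ _ _]
    _ = (∑ l : I, ∑ m : I, ∑ n : I, cc B X l m n • (a B X l * (a B X n * ss B X m)))
        + ∑ l : I, ∑ m : I, ∑ n : I, ∑ p : I,
            (cc B X l m n * (-4 * cc B X m n p)) • (a B X l * a B X p) := by
        simp only [smul_add, Finset.smul_sum, smul_smul, Finset.sum_add_distrib]
    _ = -(∑ l : I, ss B X l * ss B X l) + (-4 * kap B X) • 1 := by
        congr 1
        · -- A4
          rw [sw12 (fun l m n => cc B X l m n • (a B X l * (a B X n * ss B X m)))]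
          rw [show -(∑ l : I, ss B X l * ss B X l)
              = ∑ l : I, (-(ss B X l)) * ss B X l by
            rw [← Finset.sum_neg_distrib]
            exact Finset.sum_congr rfl fun l _ => (neg_mul _ _).symm]
          refine Finset.sum_congr rfl fun l _ => ?_
          have step : (∑ m : I, ∑ n : I, cc B X m l n • (a B X m * (a B X n * ss B X l)))
              = (∑ m : I, ∑ n : I, cc B X m l n • (a B X m * a B X n)) * ss B X l := by
            rw [Finset.sum_mul]
            refine Finset.sum_congr rfl fun m _ => ?_
            rw [Finset.sum_mul]
            refine Finset.sum_congr rfl fun n _ => ?_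
            rw [smul_mul_assoc, mul_assoc]
          rw [step]
          congr 1
          rw [show -(ss B X l) = ∑ m : I, ∑ n : I, (- cc B X l m n) • (a B X m * a B X n) by
            rw [ss, ← Finset.sum_neg_distrib]
            exact Finset.sum_congr rfl fun m _ => by
              rw [← Finset.sum_neg_distrib]
              exact Finset.sum_congr rfl fun n _ => (neg_smul _ _).symm]
          refine Finset.sum_congr rfl fun m _ => Finset.sum_congr rfl fun n _ => ?_
          rw [show cc B X m l n = - cc B X l m n from KA.c_swap12 B X hB_symm hB_inv l m n]
        · -- B4
          have reord : ∀ l : I, (∑ m : I, ∑ n : I, ∑ p : I,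
              (cc B X l m n * (-4 * cc B X m n p)) • (a B X l * a B X p))
              = ∑ p : I, (∑ m : I, ∑ n : I, cc B X l m n * (-4 * cc B X m n p))
                  • (a B X l * a B X p) := by
            intro l
            rw [← rot3 (fun p m n => (cc B X l m n * (-4 * cc B X m n p)) • (a B X l * a B X p))]
            refine Finset.sum_congr rfl fun p _ => ?_
            rw [Finset.sum_smul]
            exact Finset.sum_congr rfl fun m _ => (Finset.sum_smul).symm
          simp only [reord]
          rw [symm_collapse B X hB_symm hX
            (fun l p => ∑ m : I, ∑ n : I, cc B X l m n * (-4 * cc B X m n p))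
            (fun p q => Finset.sum_congr rfl fun m _ => Finset.sum_congr rfl fun n _ => by
              rw [show cc B X m n q = cc B X q m n from (KA.c_cyc B X hB_symm hB_inv m n q).symm,
                show cc B X m n p = cc B X p m n from (KA.c_cyc B X hB_symm hB_inv m n p).symm]
              ring)]
          congr 1
          calc (∑ p : I, ∑ m : I, ∑ n : I, cc B X p m n * (-4 * cc B X m n p))
              = ∑ p : I, ∑ m : I, ∑ n : I, cc B X p m n * (-4 * cc B X p m n) := by
                refine Finset.sum_congr rfl fun p _ => Finset.sum_congr rfl fun m _ =>
                  Finset.sum_congr rfl fun n _ => ?_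
                rw [show cc B X m n p = cc B X p m n from (KA.c_cyc B X hB_symm hB_inv m n p).symm]
            _ = -4 * kap B X := by
                rw [kap, rot3 (fun p m n => cc B X p m n * (-4 * cc B X p m n))]
                rw [Finset.mul_sum]
                refine Finset.sum_congr rfl fun m _ => ?_
                rw [Finset.mul_sum]
                refine Finset.sum_congr rfl fun n _ => ?_
                rw [Finset.mul_sum]
                refine Finset.sum_congr rfl fun p _ => ?_
                ring

lemma vsq (hB_symm : ∀ x y : L, B x y = B y x)
    (hB_inv : ∀ x y z : L, B ⁅x, y⁆ z + B y ⁅x, z⁆ = 0)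
    (hX : ∀ i j, B (X i) (X j) = if i = j then 1 else 0) :
    vv B X * vv B X = ((-1/24) * kap B X)
      • (1 : CliffordAlgebra B.toQuadraticMap) := by
  have hS : (∑ l : I, ss B X l * ss B X l)
      = (-2 * kap B X) • (1 : CliffordAlgebra B.toQuadraticMap) := by
    rw [ss_sq_expand]
    exact Zval B X hB_symm hB_inv hX
  have hx1 : (∑ l : I, ∑ m : I, ∑ n : I,
      cc B X l m n • (a B X l * (a B X m * (a B X n * vv B X))))
      = (-12:ℂ) • (vv B X * vv B X) := by
    calc (∑ l : I, ∑ m : I, ∑ n : I,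
        cc B X l m n • (a B X l * (a B X m * (a B X n * vv B X))))
        = (∑ l : I, ∑ m : I, ∑ n : I,
            cc B X l m n • (a B X l * (a B X m * a B X n))) * vv B X := by
          rw [Finset.sum_mul]
          refine Finset.sum_congr rfl fun l _ => ?_
          rw [Finset.sum_mul]
          refine Finset.sum_congr rfl fun m _ => ?_
          rw [Finset.sum_mul]
          refine Finset.sum_congr rfl fun n _ => ?_
          rw [smul_mul_assoc, mul_assoc, mul_assoc]
      _ = ((-12:ℂ) • vv B X) * vv B X := by rw [← hSV]
      _ = (-12:ℂ) • (vv B X * vv B X) := smul_mul_assoc _ _ _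
  have eq1 : (-12:ℂ) • (vv B X * vv B X)
      = -((-12:ℂ) • (vv B X * vv B X))
        - (1/2:ℂ) • ((-2 * kap B X) • (1 : CliffordAlgebra B.toQuadraticMap))
        + (1/2:ℂ) • (-((-2 * kap B X) • (1 : CliffordAlgebra B.toQuadraticMap))
            + (-4 * kap B X) • (1 : CliffordAlgebra B.toQuadraticMap))
        - (1/2:ℂ) • ((-2 * kap B X) • (1 : CliffordAlgebra B.toQuadraticMap)) := by
    calc (-12:ℂ) • (vv B X * vv B X)
        = vv B X * ((-12:ℂ) • vv B X) := (mul_smul_comm _ _ _).symm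
      _ = vv B X * ∑ l : I, ∑ m : I, ∑ n : I,
            cc B X l m n • (a B X l * (a B X m * a B X n)) := by rw [hSV]
      _ = ∑ l : I, ∑ m : I, ∑ n : I,
            cc B X l m n • (vv B X * (a B X l * (a B X m * a B X n))) := by
          rw [Finset.mul_sum]
          refine Finset.sum_congr rfl fun l _ => ?_
          rw [Finset.mul_sum]
          refine Finset.sum_congr rfl fun m _ => ?_
          rw [Finset.mul_sum]
          refine Finset.sum_congr rfl fun n _ => ?_
          rw [mul_smul_comm]
      _ = ∑ l : I, ∑ m : I, ∑ n : I,
            cc B X l m n • (-(a B X l * (a B X m * (a B X n * vv B X)))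
              - (1/2:ℂ) • (ss B X l * (a B X m * a B X n))
              + (1/2:ℂ) • (a B X l * (ss B X m * a B X n))
              - (1/2:ℂ) • (a B X l * (a B X m * ss B X n))) := by
          refine Finset.sum_congr rfl fun l _ => Finset.sum_congr rfl fun m _ =>
            Finset.sum_congr rfl fun n _ => ?_
          rw [pointpush B X hB_symm hB_inv hX l m n]
      _ = (-(∑ l : I, ∑ m : I, ∑ n : I,
              cc B X l m n • (a B X l * (a B X m * (a B X n * vv B X))))
            - ∑ l : I, ∑ m : I, ∑ n : I,
                (cc B X l m n * (1/2:ℂ)) • (ss B X l * (a B X m * a B X n)))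
          + (∑ l : I, ∑ m : I, ∑ n : I,
              (cc B X l m n * (1/2:ℂ)) • (a B X l * (ss B X m * a B X n)))
          - ∑ l : I, ∑ m : I, ∑ n : I,
              (cc B X l m n * (1/2:ℂ)) • (a B X l * (a B X m * ss B X n)) := by
          simp only [smul_neg, smul_sub, smul_add, smul_smul, Finset.sum_add_distrib,
            Finset.sum_sub_distrib, Finset.sum_neg_distrib]
      _ = _ := by
          rw [hx1,
            scalar_pull3 (1/2:ℂ) (fun l m n => cc B X l m n)
              (fun l m n => ss B X l * (a B X m * a B X n)),
            scalar_pull3 (1/2:ℂ) (fun l m n => cc B X l m n)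
              (fun l m n => a B X l * (ss B X m * a B X n)),
            scalar_pull3 (1/2:ℂ) (fun l m n => cc B X l m n)
              (fun l m n => a B X l * (a B X m * ss B X n)),
            I2val B X, I3val B X hB_symm hB_inv, I4val B X hB_symm hB_inv hX, hS]
  have h24 : (-24:ℂ) • (vv B X * vv B X)
      = (-24:ℂ) • (((-1/24) * kap B X) • (1 : CliffordAlgebra B.toQuadraticMap)) := by
    have expand : (-24:ℂ) • (vv B X * vv B X)
        = ((-12:ℂ) • (vv B X * vv B X)) + ((-12:ℂ) • (vv B X * vv B X)) := by module
    rw [expand]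
    nth_rewrite 1 [eq1]
    module
  exact smul_right_injective _ (by norm_num : (-24:ℂ) ≠ 0) h24

end KA8
end KA


namespace KA
section KA9
attribute [local instance] LieRing.ofAssociativeRing
attribute [local instance] LieAlgebra.ofAssociativeAlgebra
set_option linter.unusedSectionVars false
set_option maxHeartbeats 1000000
variable {L : Type*} [LieRing L] [LieAlgebra ℂ L]
  (B : LinearMap.BilinForm ℂ L)
  {I : Type*} [Fintype I] [DecidableEq I] (X : Module.Basis I ℂ L)

lemma collapseF {M : Type*} [AddCommMonoid M] [Module ℂ M] (l : I) (F : I → M) :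
    (∑ i : I, d l i • F i) = (2:ℂ) • F l := by
  simp [d, ite_smul, Finset.sum_ite_eq]

lemma hbr (hX : ∀ i j, B (X i) (X j) = if i = j then 1 else 0) (i j : I) :
    (UniversalEnvelopingAlgebra.ι ℂ (⁅X i, X j⁆ : L))
      = ∑ l : I, cc B X l i j • UniversalEnvelopingAlgebra.ι ℂ (X l) := by
  conv_lhs => rw [show (⁅X i, X j⁆ : L) = ∑ l : I, B (X l) ⁅X i, X j⁆ • X l from
    (KA.expand B X hX _).symm]
  rw [show (UniversalEnvelopingAlgebra.ι ℂ (∑ l : I, B (X l) ⁅X i, X j⁆ • X l)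
      : UniversalEnvelopingAlgebra ℂ L)
    = (UniversalEnvelopingAlgebra.ι ℂ).toLinearMap
        (∑ l : I, B (X l) ⁅X i, X j⁆ • X l) from rfl, map_sum]
  exact Finset.sum_congr rfl fun l _ => by rw [map_smul]; rfl

lemma ucomm (i j : I) :
    UniversalEnvelopingAlgebra.ι ℂ (X i) * UniversalEnvelopingAlgebra.ι ℂ (X j)
      - UniversalEnvelopingAlgebra.ι ℂ (X j) * UniversalEnvelopingAlgebra.ι ℂ (X i)
      = UniversalEnvelopingAlgebra.ι ℂ (⁅X i, X j⁆ : L) := by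
  rw [LieHom.map_lie]
  rfl

lemma Dsq (hB_symm : ∀ x y : L, B x y = B y x)
    (hB_inv : ∀ x y z : L, B ⁅x, y⁆ z + B y ⁅x, z⁆ = 0)
    (hX : ∀ i j, B (X i) (X j) = if i = j then 1 else 0) :
    ((∑ i : I, (UniversalEnvelopingAlgebra.ι ℂ (X i)) ⊗ₜ[ℂ] (a B X i))
        + (1 : UniversalEnvelopingAlgebra ℂ L) ⊗ₜ[ℂ] vv B X)
      * ((∑ i : I, (UniversalEnvelopingAlgebra.ι ℂ (X i)) ⊗ₜ[ℂ] (a B X i))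
        + (1 : UniversalEnvelopingAlgebra ℂ L) ⊗ₜ[ℂ] vv B X)
      = (∑ i : I, (UniversalEnvelopingAlgebra.ι ℂ (X i)) ^ 2) ⊗ₜ[ℂ] 1
        + ((-1/24) * kap B X)
          • (1 : UniversalEnvelopingAlgebra ℂ L ⊗[ℂ] CliffordAlgebra B.toQuadraticMap) := by
  set u : I → UniversalEnvelopingAlgebra ℂ L := fun i => UniversalEnvelopingAlgebra.ι ℂ (X i)
    with hu
  set S := ∑ i : I, u i ⊗ₜ[ℂ] (a B X i) with hS
  set W := (1 : UniversalEnvelopingAlgebra ℂ L) ⊗ₜ[ℂ] vv B X with hW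
  have expand : (S + W) * (S + W) = S * S + (S * W + W * S) + W * W := by noncomm_ring
  -- W * W
  have hWW : W * W = ((-1/24) * kap B X)
      • (1 : UniversalEnvelopingAlgebra ℂ L ⊗[ℂ] CliffordAlgebra B.toQuadraticMap) := by
    rw [hW, Algebra.TensorProduct.tmul_mul_tmul, one_mul,
      vsq B X hB_symm hB_inv hX, tmul_smul, ← Algebra.TensorProduct.one_def]
  -- cross terms
  have hcross : S * W + W * S
      = (-(1/2:ℂ)) • ∑ l : I, u l ⊗ₜ[ℂ] ss B X l := by
    rw [hS, hW, Finset.sum_mul, Finset.mul_sum, ← Finset.sum_add_distrib]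
    rw [Finset.smul_sum]
    refine Finset.sum_congr rfl fun i _ => ?_
    rw [Algebra.TensorProduct.tmul_mul_tmul, Algebra.TensorProduct.tmul_mul_tmul,
      mul_one, one_mul, ← TensorProduct.tmul_add, acomm_v B X hB_symm hB_inv hX i,
      tmul_smul]
  -- S * S
  have hSSexpand : S * S = ∑ i : I, ∑ j : I, (u i * u j) ⊗ₜ[ℂ] (a B X i * a B X j) := by
    rw [hS, Finset.sum_mul]
    refine Finset.sum_congr rfl fun i _ => ?_
    rw [Finset.mul_sum]
    exact Finset.sum_congr rfl fun j _ => Algebra.TensorProduct.tmul_mul_tmul _ _ _ _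
  have EqA : S * S + (∑ i : I, ∑ j : I, (u j * u i) ⊗ₜ[ℂ] (a B X i * a B X j))
      = (2:ℂ) • ((∑ i : I, u i ^ 2) ⊗ₜ[ℂ]
          (1 : CliffordAlgebra B.toQuadraticMap)) := by
    rw [hSSexpand,
      show (∑ i : I, ∑ j : I, (u i * u j) ⊗ₜ[ℂ] (a B X i * a B X j))
        = ∑ i : I, ∑ j : I, (u j * u i) ⊗ₜ[ℂ] (a B X j * a B X i) from Finset.sum_comm,
      ← Finset.sum_add_distrib]
    rw [TensorProduct.sum_tmul, Finset.smul_sum]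
    refine Finset.sum_congr rfl fun i _ => ?_
    rw [← Finset.sum_add_distrib]
    have point : ∀ j : I, (u j * u i) ⊗ₜ[ℂ] (a B X j * a B X i)
        + (u j * u i) ⊗ₜ[ℂ] (a B X i * a B X j)
        = d i j • ((u j * u i) ⊗ₜ[ℂ] (1 : CliffordAlgebra B.toQuadraticMap)) := by
      intro j
      rw [← TensorProduct.tmul_add, anti' B X hB_symm hX i j, sub_add_cancel,
        tmul_smul]
    simp only [point]
    rw [collapseF i (fun j => (u j * u i) ⊗ₜ[ℂ] (1 : CliffordAlgebra B.toQuadraticMap)),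
      sq]
  have EqB : S * S - (∑ i : I, ∑ j : I, (u j * u i) ⊗ₜ[ℂ] (a B X i * a B X j))
      = ∑ i : I, ∑ j : I, ∑ l : I,
          cc B X l i j • (u l ⊗ₜ[ℂ] (a B X i * a B X j)) := by
    rw [hSSexpand, ← Finset.sum_sub_distrib]
    refine Finset.sum_congr rfl fun i _ => ?_
    rw [← Finset.sum_sub_distrib]
    refine Finset.sum_congr rfl fun j _ => ?_
    rw [← TensorProduct.sub_tmul, ucomm, hbr B X hX, TensorProduct.sum_tmul]
    exact Finset.sum_congr rfl fun l _ => by rw [TensorProduct.smul_tmul']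
  have hP : (∑ i : I, ∑ j : I, ∑ l : I, cc B X l i j • (u l ⊗ₜ[ℂ] (a B X i * a B X j)))
      = ∑ l : I, u l ⊗ₜ[ℂ] ss B X l := by
    rw [(rot3 (fun l i j => cc B X l i j • (u l ⊗ₜ[ℂ] (a B X i * a B X j)))).symm]
    refine Finset.sum_congr rfl fun l _ => ?_
    rw [ss, TensorProduct.tmul_sum]
    refine Finset.sum_congr rfl fun i _ => ?_
    rw [TensorProduct.tmul_sum]
    exact Finset.sum_congr rfl fun j _ => by rw [tmul_smul]
  -- assemble
  have h2 : (2:ℂ) • ((S + W) * (S + W))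
      = (2:ℂ) • ((∑ i : I, u i ^ 2) ⊗ₜ[ℂ] (1 : CliffordAlgebra B.toQuadraticMap)
          + ((-1/24) * kap B X)
            • (1 : UniversalEnvelopingAlgebra ℂ L ⊗[ℂ] CliffordAlgebra B.toQuadraticMap)) := by
    rw [expand, hWW, hcross]
    have key : (2:ℂ) • (S * S)
        = (2:ℂ) • ((∑ i : I, u i ^ 2) ⊗ₜ[ℂ] (1 : CliffordAlgebra B.toQuadraticMap))
          + ∑ l : I, u l ⊗ₜ[ℂ] ss B X l := by
      have comb : (2:ℂ) • (S * S)
          = (S * S + (∑ i : I, ∑ j : I, (u j * u i) ⊗ₜ[ℂ] (a B X i * a B X j)))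
            + (S * S - (∑ i : I, ∑ j : I, (u j * u i) ⊗ₜ[ℂ] (a B X i * a B X j))) := by
        module
      rw [comb, EqA, EqB, hP]
    calc (2:ℂ) • (S * S + (-(1/2:ℂ)) • (∑ l : I, u l ⊗ₜ[ℂ] ss B X l)
          + ((-1/24) * kap B X)
            • (1 : UniversalEnvelopingAlgebra ℂ L ⊗[ℂ] CliffordAlgebra B.toQuadraticMap))
        = (2:ℂ) • (S * S) + (-1:ℂ) • (∑ l : I, u l ⊗ₜ[ℂ] ss B X l)
          + (2:ℂ) • (((-1/24) * kap B X)
            • (1 : UniversalEnvelopingAlgebra ℂ L ⊗[ℂ] CliffordAlgebra B.toQuadraticMap)) := by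
          module
      _ = _ := by rw [key]; module
  exact smul_right_injective _ (by norm_num : (2:ℂ) ≠ 0) h2

end KA9
end KA


/-- Kostant's formula in the case `𝔥 = 0`: for a finite-dimensional complex quadratic
Lie algebra `(𝔤, B)`, there is a constant `c_𝔤 ∈ ℂ` such that `v² = c_𝔤 · 1` in `C(𝔤)`
and `D_𝔤² = Ω_𝔤 ⊗ 1 + c_𝔤 · 1` in `U(𝔤) ⊗ C(𝔤)`. -/
theorem kostant_formula_quadratic {L : Type*} [LieRing L] [LieAlgebra ℂ L]
    [FiniteDimensional ℂ L]
    (B : LinearMap.BilinForm ℂ L)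
    (hB_symm : ∀ x y : L, B x y = B y x)
    (hB_inv : ∀ x y z : L, B ⁅x, y⁆ z + B y ⁅x, z⁆ = 0)
    (hB_nd : B.Nondegenerate)
    {I : Type*} [Fintype I] [DecidableEq I] (X : Module.Basis I ℂ L)
    (hX : ∀ i j, B (X i) (X j) = if i = j then 1 else 0)
    (v : CliffordAlgebra B.toQuadraticMap)
    (hv : v = (-(1/12 : ℂ)) • ∑ i : I, ∑ j : I, ∑ k : I,
        B (X i) ⁅X j, X k⁆ •
          (ι B.toQuadraticMap (X i) * ι B.toQuadraticMap (X j) * ι B.toQuadraticMap (X k)))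
    (D : UniversalEnvelopingAlgebra ℂ L ⊗[ℂ] CliffordAlgebra B.toQuadraticMap)
    (hD : D = ∑ i : I,
        (UniversalEnvelopingAlgebra.ι ℂ (X i)) ⊗ₜ[ℂ] (ι B.toQuadraticMap (X i))
        + 1 ⊗ₜ[ℂ] v)
    (Ω : UniversalEnvelopingAlgebra ℂ L)
    (hΩ : Ω = ∑ i : I, (UniversalEnvelopingAlgebra.ι ℂ (X i)) ^ 2) :
    ∃ c : ℂ, v ^ 2 = c • (1 : CliffordAlgebra B.toQuadraticMap) ∧
      D ^ 2 = Ω ⊗ₜ[ℂ] 1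
        + c • (1 : UniversalEnvelopingAlgebra ℂ L ⊗[ℂ] CliffordAlgebra B.toQuadraticMap) := by
  refine ⟨(-1/24) * KA.kap B X, ?_, ?_⟩
  · have hv' : v = KA.vv B X := hv
    rw [pow_two, hv']
    exact KA.vsq B X hB_symm hB_inv hX
  · have hv' : v = KA.vv B X := hv
    rw [pow_two, hD, hv', hΩ]
    exact KA.Dsq B X hB_symm hB_inv hX
end

section
/- Decomposition lemma. Let (𝔤, 𝔥, B) be a complex quadratic pair with orthonormal bases (Xᵢ) of 𝔥^⊥ and (Yⱼ) of 𝔥, so that (Xᵢ) ∪ (Yⱼ) is an orthonormal basis of 𝔤. Let φ : C(𝔥^⊥) → C(𝔤) and ψ : C(𝔥) → C(𝔤) be the algebra homomorphisms induced by the isometric inclusions 𝔥^⊥ ↪ 𝔤 and 𝔥 ↪ 𝔤. In U(𝔤) ⊗ C(𝔤), let D_𝔤 = Σᵢ Xᵢ ⊗ Xᵢ + Σⱼ Yⱼ ⊗ Yⱼ + 1 ⊗ v_𝔤 with v_𝔤 the cubic element of 𝔤, let D' = Σᵢ Xᵢ ⊗ φ(Xᵢ) + 1 ⊗ φ(v_{𝔤/𝔥})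 with v_{𝔤/𝔥} = −(1/12) Σ_{i,j,k} B(Xᵢ,[Xⱼ,Xₖ]) XᵢXⱼXₖ ∈ C(𝔥^⊥), and let D'' = Σⱼ (Yⱼ ⊗ 1 + 1 ⊗ φ(ν(Yⱼ)))·(1 ⊗ ψ(Yⱼ)) + 1 ⊗ ψ(v_𝔥), where ν(y) = (1/4) Σᵢ [y,Xᵢ]·Xᵢ ∈ C(𝔥^⊥) and v_𝔥 = −(1/12) Σ_{j,k,l} B(Yⱼ,[Yₖ,Yₗ]) YⱼYₖYₗ ∈ C(𝔥). Then D_𝔤 = D' + D''. -/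
open CliffordAlgebra TensorProduct

private lemma aux_ortho_comm {L : Type*} [AddCommGroup L] [Module ℂ L]
    (B : LinearMap.BilinForm ℂ L) (a b : L) (hab : B a b = 0) (hba : B b a = 0) :
    ι B.toQuadraticMap a * ι B.toQuadraticMap b
      = -(ι B.toQuadraticMap b * ι B.toQuadraticMap a) :=
  ι_mul_ι_comm_of_isOrtho (by
    unfold QuadraticMap.IsOrtho
    simp only [LinearMap.BilinMap.toQuadraticMap_apply, map_add, LinearMap.add_apply, hab, hba]
    ring)

private lemma aux_expand {L : Type*} [AddCommGroup L] [Module ℂ L]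
    (B : LinearMap.BilinForm ℂ L) (W : Submodule ℂ L)
    {I : Type*} [Fintype I] [DecidableEq I] (Xb : Module.Basis I ℂ W)
    (hX : ∀ i j, B (Xb i : L) (Xb j : L) = if i = j then 1 else 0) (z : W) :
    (z : L) = ∑ k, B (Xb k : L) (z : L) • (Xb k : L) := by
  have hz := Module.Basis.sum_repr Xb z
  have hcoef : ∀ k, B (Xb k : L) (z : L) = Xb.repr z k := by
    intro k
    conv_lhs => rw [← hz]
    push_cast [Submodule.coe_sum]
    rw [map_sum]
    simp [hX, Finset.sum_ite_eq']
  conv_lhs => rw [← hz]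
  push_cast [Submodule.coe_sum]
  exact Finset.sum_congr rfl fun k _ => by rw [hcoef]

private noncomputable def trip {L : Type*} [LieRing L] [LieAlgebra ℂ L]
    (B : LinearMap.BilinForm ℂ L) (a b c : L) : CliffordAlgebra B.toQuadraticMap :=
  B a ⁅b, c⁆ • (ι B.toQuadraticMap a * ι B.toQuadraticMap b * ι B.toQuadraticMap c)

private lemma reorder3 {α β γ M : Type*} [Fintype α] [Fintype β] [Fintype γ]
    [AddCommMonoid M] (g : α → β → γ → M) :
    (∑ a, ∑ b, ∑ c, g a b c) = ∑ c, ∑ a, ∑ b, g a b c :=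
  calc (∑ a, ∑ b, ∑ c, g a b c) = ∑ a, ∑ c, ∑ b, g a b c :=
        Finset.sum_congr rfl fun a _ => Finset.sum_comm
    _ = ∑ c, ∑ a, ∑ b, g a b c := Finset.sum_comm

private lemma trip_def {L : Type*} [LieRing L] [LieAlgebra ℂ L]
    (B : LinearMap.BilinForm ℂ L) (a b c : L) :
    B a ⁅b, c⁆ • (ι B.toQuadraticMap a * ι B.toQuadraticMap b * ι B.toQuadraticMap c)
      = trip B a b c := rfl

/-- The quadratic form `x ↦ B(x,x)` restricted to a subspace `W`. -/
noncomputable def restrictedQF {L : Type*} [AddCommGroup L] [Module ℂ L]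
    (B : LinearMap.BilinForm ℂ L) (W : Submodule ℂ L) : QuadraticForm ℂ W :=
  B.toQuadraticMap.comp W.subtype

/-- The inclusion `W ↪ L` as an isometry of quadratic forms. -/
noncomputable def inclIsometry {L : Type*} [AddCommGroup L] [Module ℂ L]
    (B : LinearMap.BilinForm ℂ L) (W : Submodule ℂ L) :
    (restrictedQF B W) →qᵢ B.toQuadraticMap :=
  { toLinearMap := W.subtype
    map_app' := fun _ => rfl }

/-- Decomposition lemma: `D_𝔤 = D' + D''` in `U(𝔤) ⊗ C(𝔤)`. -/
theorem dirac_decomposition {L : Type*} [LieRing L] [LieAlgebra ℂ L]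
    [FiniteDimensional ℂ L]
    (B : LinearMap.BilinForm ℂ L)
    (hB_symm : ∀ x y : L, B x y = B y x)
    (hB_inv : ∀ x y z : L, B ⁅x, y⁆ z + B y ⁅x, z⁆ = 0)
    (hB_nd : B.Nondegenerate)
    (H : LieSubalgebra ℂ L)
    (hB_nd_H : ∀ y ∈ H, (∀ z ∈ H, B y z = 0) → y = 0)
    (Hp : Submodule ℂ L)
    (hHp : ∀ x : L, x ∈ Hp ↔ ∀ y ∈ H, B y x = 0)
    (hcompl : IsCompl H.toSubmodule Hp)
    (hstab : ∀ (y : H) (x : Hp), ⁅(y : L), (x : L)⁆ ∈ Hp)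
    {I : Type*} [Fintype I] [DecidableEq I] (X : Module.Basis I ℂ Hp)
    (hX : ∀ i j, B (X i : L) (X j : L) = if i = j then 1 else 0)
    {J : Type*} [Fintype J] [DecidableEq J] (Y : Module.Basis J ℂ H)
    (hY : ∀ i j, B (Y i : L) (Y j : L) = if i = j then 1 else 0)
    -- the combined orthonormal family of `𝔤`
    (e : I ⊕ J → L) (he : e = Sum.elim (fun i => (X i : L)) (fun j => (Y j : L)))
    -- the cubic element of `𝔤`
    (vg : CliffordAlgebra B.toQuadraticMap)
    (hvg : vg = (-(1/12 : ℂ)) • ∑ a : I ⊕ J, ∑ b : I ⊕ J, ∑ c : I ⊕ J,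
        B (e a) ⁅e b, e c⁆ •
          (ι B.toQuadraticMap (e a) * ι B.toQuadraticMap (e b) * ι B.toQuadraticMap (e c)))
    -- the cubic element `v_{𝔤/𝔥}` of `C(𝔥^⊥)`
    (v : CliffordAlgebra (restrictedQF B Hp))
    (hv : v = (-(1/12 : ℂ)) • ∑ i : I, ∑ j : I, ∑ k : I,
        B (X i : L) ⁅(X j : L), (X k : L)⁆ •
          (ι (restrictedQF B Hp) (X i) * ι (restrictedQF B Hp) (X j) *
            ι (restrictedQF B Hp) (X k)))
    -- the cubic element `v_𝔥` of `C(𝔥)`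
    (vh : CliffordAlgebra (restrictedQF B H.toSubmodule))
    (hvh : vh = (-(1/12 : ℂ)) • ∑ j : J, ∑ k : J, ∑ l : J,
        B (Y j : L) ⁅(Y k : L), (Y l : L)⁆ •
          (ι (restrictedQF B H.toSubmodule) (Y j) * ι (restrictedQF B H.toSubmodule) (Y k) *
            ι (restrictedQF B H.toSubmodule) (Y l)))
    (ν : H → CliffordAlgebra (restrictedQF B Hp))
    (hν : ∀ y : H, ν y = (1/4 : ℂ) • ∑ i : I,
        ι (restrictedQF B Hp) ⟨⁅(y : L), (X i : L)⁆, hstab y (X i)⟩ *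
          ι (restrictedQF B Hp) (X i))
    (Dg D' D'' : UniversalEnvelopingAlgebra ℂ L ⊗[ℂ] CliffordAlgebra B.toQuadraticMap)
    (hDg : Dg = ∑ i : I,
        (UniversalEnvelopingAlgebra.ι ℂ (X i : L)) ⊗ₜ[ℂ] (ι B.toQuadraticMap (X i : L))
        + ∑ j : J,
        (UniversalEnvelopingAlgebra.ι ℂ (Y j : L)) ⊗ₜ[ℂ] (ι B.toQuadraticMap (Y j : L))
        + 1 ⊗ₜ[ℂ] vg)
    (hD' : D' = ∑ i : I,
        (UniversalEnvelopingAlgebra.ι ℂ (X i : L)) ⊗ₜ[ℂ]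
          (CliffordAlgebra.map (inclIsometry B Hp) (ι (restrictedQF B Hp) (X i)))
        + 1 ⊗ₜ[ℂ] (CliffordAlgebra.map (inclIsometry B Hp) v))
    (hD'' : D'' = ∑ j : J,
        ((UniversalEnvelopingAlgebra.ι ℂ (Y j : L)) ⊗ₜ[ℂ] 1
          + 1 ⊗ₜ[ℂ] (CliffordAlgebra.map (inclIsometry B Hp) (ν (Y j))))
        * (1 ⊗ₜ[ℂ] (CliffordAlgebra.map (inclIsometry B H.toSubmodule)
            (ι (restrictedQF B H.toSubmodule) (Y j))))
        + 1 ⊗ₜ[ℂ] (CliffordAlgebra.map (inclIsometry B H.toSubmodule) vh)) :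
    Dg = D' + D'' := by
  classical
  subst he hDg hD' hD''
  -- basic facts
  have hφι : ∀ x : Hp, CliffordAlgebra.map (inclIsometry B Hp) (ι (restrictedQF B Hp) x)
      = ι B.toQuadraticMap (x : L) := fun x => CliffordAlgebra.map_apply_ι _ x
  have hψι : ∀ x : H.toSubmodule,
      CliffordAlgebra.map (inclIsometry B H.toSubmodule) (ι (restrictedQF B H.toSubmodule) x)
      = ι B.toQuadraticMap (x : L) := fun x => CliffordAlgebra.map_apply_ι _ x
  have hBhp : ∀ z : L, z ∈ Hp → ∀ w : L, w ∈ H → B w z = 0 :=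
    fun z hz w hw => (hHp z).1 hz w hw
  have hYX0 : ∀ (j : J) (x : Hp), B (Y j : L) (x : L) = 0 :=
    fun j x => hBhp x x.2 _ (Y j).2
  have hXY0 : ∀ (x : Hp) (j : J), B (x : L) (Y j : L) = 0 :=
    fun x j => by rw [hB_symm]; exact hYX0 j x
  have hanti : ∀ (j : J) (x : Hp),
      ι B.toQuadraticMap (Y j : L) * ι B.toQuadraticMap (x : L)
        = -(ι B.toQuadraticMap (x : L) * ι B.toQuadraticMap (Y j : L)) :=
    fun j x => aux_ortho_comm B _ _ (hYX0 j x) (hXY0 x j)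
  -- monomial reorderings
  have monom1 : ∀ (j : J) (k l : I),
      ι B.toQuadraticMap (Y j : L) * ι B.toQuadraticMap (X k : L) * ι B.toQuadraticMap (X l : L)
      = ι B.toQuadraticMap (X k : L) * ι B.toQuadraticMap (X l : L)
        * ι B.toQuadraticMap (Y j : L) := by
    intro j k l
    rw [hanti j (X k), neg_mul, mul_assoc, hanti j (X l), mul_neg, neg_neg, ← mul_assoc]
  have monom2 : ∀ (j : J) (k l : I),
      ι B.toQuadraticMap (X k : L) * ι B.toQuadraticMap (Y j : L) * ι B.toQuadraticMap (X l : L)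
      = -(ι B.toQuadraticMap (X k : L) * ι B.toQuadraticMap (X l : L)
        * ι B.toQuadraticMap (Y j : L)) := by
    intro j k l
    rw [mul_assoc, hanti j (X l), mul_neg, ← mul_assoc]
  -- scalar identities
  have skew : ∀ (j : J) (k l : I),
      B (X l : L) ⁅(Y j : L), (X k : L)⁆ = -B (X k : L) ⁅(Y j : L), (X l : L)⁆ := by
    intro j k l
    have h := hB_inv (Y j : L) (X k : L) (X l : L)
    have h2 := hB_symm ⁅(Y j : L), (X k : L)⁆ (X l : L)
    linear_combination h - h2
  have inv2 : ∀ (j : J) (k l : I),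
      B (X k : L) ⁅(X l : L), (Y j : L)⁆ = -B (X k : L) ⁅(Y j : L), (X l : L)⁆ := by
    intro j k l
    rw [show ⁅(X l : L), (Y j : L)⁆ = -⁅(Y j : L), (X l : L)⁆ from (lie_skew _ _).symm,
      map_neg]
  have inv1 : ∀ (j : J) (k l : I),
      B (Y j : L) ⁅(X k : L), (X l : L)⁆ = -B (X k : L) ⁅(Y j : L), (X l : L)⁆ := by
    intro j k l
    have h := hB_inv (X k : L) (Y j : L) (X l : L)
    have h4 : B ⁅(X k : L), (Y j : L)⁆ (X l : L) = -B ⁅(Y j : L), (X k : L)⁆ (X l : L) := by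
      rw [show ⁅(X k : L), (Y j : L)⁆ = -⁅(Y j : L), (X k : L)⁆ from (lie_skew _ _).symm,
        map_neg, LinearMap.neg_apply]
    have h2 := hB_symm ⁅(Y j : L), (X k : L)⁆ (X l : L)
    have h3 := skew j k l
    linear_combination h - h4 + h2 + h3
  -- zero coefficients
  have z1 : ∀ (i : I) (k l : J), B (X i : L) ⁅(Y k : L), (Y l : L)⁆ = 0 := by
    intro i k l
    rw [hB_symm]
    exact hBhp _ (X i).2 _ (H.lie_mem (Y k).2 (Y l).2)
  have z2 : ∀ (j k : J) (l : I), B (Y j : L) ⁅(Y k : L), (X l : L)⁆ = 0 :=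
    fun j k l => hBhp _ (hstab (Y k) (X l)) _ (Y j).2
  have z3 : ∀ (j : J) (k : I) (l : J), B (Y j : L) ⁅(X k : L), (Y l : L)⁆ = 0 := by
    intro j k l
    rw [show ⁅(X k : L), (Y l : L)⁆ = -⁅(Y l : L), (X k : L)⁆ from (lie_skew _ _).symm,
      map_neg, z2 j l k, neg_zero]
  -- expansion of brackets in the Clifford algebra
  have hbr : ∀ (j : J) (i : I), ι B.toQuadraticMap ⁅(Y j : L), (X i : L)⁆
      = ∑ k, B (X k : L) ⁅(Y j : L), (X i : L)⁆ • ι B.toQuadraticMap (X k : L) := by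
    intro j i
    have h : ⁅(Y j : L), (X i : L)⁆
        = ∑ k, B (X k : L) ⁅(Y j : L), (X i : L)⁆ • (X k : L) :=
      aux_expand B Hp X hX ⟨_, hstab (Y j) (X i)⟩
    conv_lhs => rw [h]
    rw [map_sum]
    simp only [map_smul]
  -- the `ν`-terms
  have hφν : ∀ j : J,
      CliffordAlgebra.map (inclIsometry B Hp) (ν (Y j)) * ι B.toQuadraticMap (Y j : L)
      = (1/4 : ℂ) • ∑ k : I, ∑ l : I, B (X k : L) ⁅(Y j : L), (X l : L)⁆ •
          (ι B.toQuadraticMap (X k : L) * ι B.toQuadraticMap (X l : L)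
            * ι B.toQuadraticMap (Y j : L)) := by
    intro j
    rw [hν (Y j), map_smul, map_sum, smul_mul_assoc, Finset.sum_mul]
    congr 1
    refine (Finset.sum_congr rfl fun i _ => ?_).trans Finset.sum_comm
    rw [map_mul]
    simp only [hφι]
    rw [hbr j i, Finset.sum_mul, Finset.sum_mul]
    refine Finset.sum_congr rfl fun k _ => ?_
    rw [smul_mul_assoc, smul_mul_assoc]
  have hT : (∑ j : J, CliffordAlgebra.map (inclIsometry B Hp) (ν (Y j))
        * ι B.toQuadraticMap (Y j : L))
      = (1/4 : ℂ) • ∑ j : J, ∑ k : I, ∑ l : I, B (X k : L) ⁅(Y j : L), (X l : L)⁆ •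
          (ι B.toQuadraticMap (X k : L) * ι B.toQuadraticMap (X l : L)
            * ι B.toQuadraticMap (Y j : L)) := by
    rw [Finset.smul_sum]
    exact Finset.sum_congr rfl fun j _ => hφν j
  -- images of the cubic elements
  have hφv : CliffordAlgebra.map (inclIsometry B Hp) v
      = (-(1/12 : ℂ)) • ∑ i : I, ∑ k : I, ∑ l : I,
          trip B (X i : L) (X k : L) (X l : L) := by
    rw [hv, map_smul]
    congr 1
    rw [map_sum]
    refine Finset.sum_congr rfl fun i _ => ?_
    rw [map_sum]
    refine Finset.sum_congr rfl fun k _ => ?_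
    rw [map_sum]
    refine Finset.sum_congr rfl fun l _ => ?_
    rw [map_smul, map_mul, map_mul, hφι, hφι, hφι, trip_def]
  have hψvh : CliffordAlgebra.map (inclIsometry B H.toSubmodule) vh
      = (-(1/12 : ℂ)) • ∑ j : J, ∑ k : J, ∑ l : J,
          trip B (Y j : L) (Y k : L) (Y l : L) := by
    rw [hvh, map_smul]
    congr 1
    rw [map_sum]
    refine Finset.sum_congr rfl fun j _ => ?_
    rw [map_sum]
    refine Finset.sum_congr rfl fun k _ => ?_
    rw [map_sum]
    refine Finset.sum_congr rfl fun l _ => ?_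
    rw [map_smul, map_mul, map_mul, hψι, hψι, hψι, trip_def]
  -- splitting of the big sum into eight blocks
  have split : (∑ a : I ⊕ J, ∑ b : I ⊕ J, ∑ c : I ⊕ J,
        B (Sum.elim (fun i => (X i : L)) (fun j => (Y j : L)) a)
            ⁅Sum.elim (fun i => (X i : L)) (fun j => (Y j : L)) b,
              Sum.elim (fun i => (X i : L)) (fun j => (Y j : L)) c⁆ •
          (ι B.toQuadraticMap (Sum.elim (fun i => (X i : L)) (fun j => (Y j : L)) a) *
              ι B.toQuadraticMap (Sum.elim (fun i => (X i : L)) (fun j => (Y j : L)) b) *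
            ι B.toQuadraticMap (Sum.elim (fun i => (X i : L)) (fun j => (Y j : L)) c)))
      = (∑ i : I, ∑ k : I, ∑ l : I, trip B (X i : L) (X k : L) (X l : L))
        + (∑ k : I, ∑ l : I, ∑ j : J, trip B (X k : L) (X l : L) (Y j : L))
        + (∑ k : I, ∑ j : J, ∑ l : I, trip B (X k : L) (Y j : L) (X l : L))
        + (∑ i : I, ∑ k : J, ∑ l : J, trip B (X i : L) (Y k : L) (Y l : L))
        + (∑ j : J, ∑ k : I, ∑ l : I, trip B (Y j : L) (X k : L) (X l : L))
        + (∑ j : J, ∑ k : I, ∑ l : J, trip B (Y j : L) (X k : L) (Y l : L))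
        + (∑ j : J, ∑ k : J, ∑ l : I, trip B (Y j : L) (Y k : L) (X l : L))
        + (∑ j : J, ∑ k : J, ∑ l : J, trip B (Y j : L) (Y k : L) (Y l : L)) := by
    simp only [Fintype.sum_sum_type, Sum.elim_inl, Sum.elim_inr, Finset.sum_add_distrib,
      trip_def]
    abel
  -- the three mixed blocks
  have claimYXX : (∑ j : J, ∑ k : I, ∑ l : I, trip B (Y j : L) (X k : L) (X l : L))
      = -∑ j : J, ∑ k : I, ∑ l : I, B (X k : L) ⁅(Y j : L), (X l : L)⁆ •
          (ι B.toQuadraticMap (X k : L) * ι B.toQuadraticMap (X l : L)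
            * ι B.toQuadraticMap (Y j : L)) := by
    rw [← Finset.sum_neg_distrib]
    refine Finset.sum_congr rfl fun j _ => ?_
    rw [← Finset.sum_neg_distrib]
    refine Finset.sum_congr rfl fun k _ => ?_
    rw [← Finset.sum_neg_distrib]
    refine Finset.sum_congr rfl fun l _ => ?_
    rw [← trip_def, inv1 j k l, monom1 j k l, neg_smul]
  have claimXYX : (∑ k : I, ∑ j : J, ∑ l : I, trip B (X k : L) (Y j : L) (X l : L))
      = -∑ j : J, ∑ k : I, ∑ l : I, B (X k : L) ⁅(Y j : L), (X l : L)⁆ •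
          (ι B.toQuadraticMap (X k : L) * ι B.toQuadraticMap (X l : L)
            * ι B.toQuadraticMap (Y j : L)) := by
    rw [Finset.sum_comm, ← Finset.sum_neg_distrib]
    refine Finset.sum_congr rfl fun j _ => ?_
    rw [← Finset.sum_neg_distrib]
    refine Finset.sum_congr rfl fun k _ => ?_
    rw [← Finset.sum_neg_distrib]
    refine Finset.sum_congr rfl fun l _ => ?_
    rw [← trip_def, monom2 j k l, smul_neg]
  have claimXXY : (∑ k : I, ∑ l : I, ∑ j : J, trip B (X k : L) (X l : L) (Y j : L))
      = -∑ j : J, ∑ k : I, ∑ l : I, B (X k : L) ⁅(Y j : L), (X l : L)⁆ •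
          (ι B.toQuadraticMap (X k : L) * ι B.toQuadraticMap (X l : L)
            * ι B.toQuadraticMap (Y j : L)) := by
    rw [reorder3 (fun (k l : I) (j : J) => trip B (X k : L) (X l : L) (Y j : L)), ← Finset.sum_neg_distrib]
    refine Finset.sum_congr rfl fun j _ => ?_
    rw [← Finset.sum_neg_distrib]
    refine Finset.sum_congr rfl fun k _ => ?_
    rw [← Finset.sum_neg_distrib]
    refine Finset.sum_congr rfl fun l _ => ?_
    rw [← trip_def, inv2 j k l, neg_smul]
  -- the three vanishing blocks
  have zeroXYY : (∑ i : I, ∑ k : J, ∑ l : J, trip B (X i : L) (Y k : L) (Y l : L)) = 0 :=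
    Finset.sum_eq_zero fun i _ => Finset.sum_eq_zero fun k _ => Finset.sum_eq_zero fun l _ => by
      rw [← trip_def, z1 i k l, zero_smul]
  have zeroYXY : (∑ j : J, ∑ k : I, ∑ l : J, trip B (Y j : L) (X k : L) (Y l : L)) = 0 :=
    Finset.sum_eq_zero fun j _ => Finset.sum_eq_zero fun k _ => Finset.sum_eq_zero fun l _ => by
      rw [← trip_def, z3 j k l, zero_smul]
  have zeroYYX : (∑ j : J, ∑ k : J, ∑ l : I, trip B (Y j : L) (Y k : L) (X l : L)) = 0 :=
    Finset.sum_eq_zero fun j _ => Finset.sum_eq_zero fun k _ => Finset.sum_eq_zero fun l _ => by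
      rw [← trip_def, z2 j k l, zero_smul]
  -- the key Clifford-algebra identity
  have cliff : vg
      = CliffordAlgebra.map (inclIsometry B Hp) v
        + (∑ j : J, CliffordAlgebra.map (inclIsometry B Hp) (ν (Y j))
            * ι B.toQuadraticMap (Y j : L))
        + CliffordAlgebra.map (inclIsometry B H.toSubmodule) vh := by
    rw [hvg, split, claimYXX, claimXYX, claimXXY, zeroXYY, zeroYXY, zeroYYX, hφv, hψvh, hT]
    module
  -- assembling the tensor identity
  rw [cliff]
  simp only [hφι, hψι, Algebra.TensorProduct.tmul_mul_tmul, add_mul, one_mul, mul_one,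
    TensorProduct.tmul_add, Finset.sum_add_distrib, TensorProduct.tmul_sum]
  abel
end

section
/- Anticommutation lemma. With the notation of the decomposition lemma — (𝔤, 𝔥, B) a complex quadratic pair, orthonormal bases (Xᵢ) of 𝔥^⊥ and (Yⱼ) of 𝔥, φ : C(𝔥^⊥) → C(𝔤) and ψ : C(𝔥) → C(𝔤) the homomorphisms induced by the isometric inclusions, D' = Σᵢ Xᵢ ⊗ φ(Xᵢ) + 1 ⊗ φ(v_{𝔤/𝔥}) and D'' = Σⱼ (Yⱼ ⊗ 1 + 1 ⊗ φ(ν(Yⱼ)))·(1 ⊗ ψ(Yⱼ)) + 1 ⊗ ψ(v_𝔥) in U(𝔤) ⊗ C(𝔤) — the two components anticommute: D'·D'' + D''·D' = 0. -/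
open CliffordAlgebra TensorProduct

set_option linter.unusedSectionVars false
set_option linter.unusedVariables false
set_option maxHeartbeats 1000000

namespace DiracAux

variable {C : Type*} [Ring C] [Algebra ℂ C] {I : Type*} [Fintype I] [DecidableEq I]
  {J : Type*} [Fintype J]


/-- `z` anticommutes with `w`. -/
def Anti (z w : C) : Prop := z * w = -(w * z)

lemma Anti.symm {z w : C} (h : Anti z w) : Anti w z := by
  unfold Anti at *; rw [h, neg_neg]

lemma Anti.add_right {z w₁ w₂ : C} (h₁ : Anti z w₁) (h₂ : Anti z w₂) : Anti z (w₁ + w₂) := by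
  unfold Anti at *; rw [mul_add, add_mul, h₁, h₂, neg_add]

lemma Anti.zero_right {z : C} : Anti z 0 := by unfold Anti; simp

lemma Anti.smul_right {z w : C} (c : ℂ) (h : Anti z w) : Anti z (c • w) := by
  unfold Anti at *; rw [mul_smul_comm, smul_mul_assoc, h]; rw [smul_neg]

lemma Anti.sum_right {ι : Type*} (s : Finset ι) {z : C} {f : ι → C}
    (h : ∀ i ∈ s, Anti z (f i)) : Anti z (∑ i ∈ s, f i) := by
  classical
  induction s using Finset.induction_on with
  | empty => simpa using Anti.zero_right
  | insert _ _ hx ih =>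
      rw [Finset.sum_insert hx]
      exact Anti.add_right (h _ (Finset.mem_insert_self _ _))
        (ih fun i hi => h i (Finset.mem_insert_of_mem hi))

lemma Anti.mul_mul_right {z w₁ w₂ w₃ : C} (h₁ : Anti z w₁) (h₂ : Anti z w₂) (h₃ : Anti z w₃) :
    Anti z (w₁ * w₂ * w₃) := by
  unfold Anti at *
  calc z * (w₁ * w₂ * w₃) = (z * w₁) * w₂ * w₃ := by noncomm_ring
    _ = -(w₁ * (z * w₂) * w₃) := by rw [h₁]; noncomm_ring
    _ = w₁ * w₂ * (z * w₃) := by rw [h₂]; noncomm_ring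
    _ = -(w₁ * w₂ * w₃ * z) := by rw [h₃]; noncomm_ring

lemma Anti.comm_of_two {z w₁ w₂ : C} (h₁ : Anti z w₁) (h₂ : Anti z w₂) :
    z * (w₁ * w₂) = (w₁ * w₂) * z := by
  unfold Anti at *
  calc z * (w₁ * w₂) = (z * w₁) * w₂ := by noncomm_ring
    _ = -(w₁ * (z * w₂)) := by rw [h₁]; noncomm_ring
    _ = w₁ * w₂ * z := by rw [h₂]; noncomm_ring




lemma comm_deriv₃ (N a b c : C) :
    N * (a * b * c) - (a * b * c) * N
      = (N * a - a * N) * b * c + a * (N * b - b * N) * c + a * b * (N * c - c * N) := by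
  noncomm_ring


lemma Nmul (x : I → C) (a2 : I → I → ℂ)
    (hxx : ∀ i k, x i * x k = algebraMap ℂ C (if i = k then 2 else 0) - x k * x i)
    (ha2 : ∀ i k, a2 k i = - a2 i k) (i : I) :
    ((1/4 : ℂ) • ∑ k, (∑ m, a2 k m • x m) * x k) * x i
      - x i * ((1/4 : ℂ) • ∑ k, (∑ m, a2 k m • x m) * x k)
      = ∑ m, a2 i m • x m := by
  set w : I → C := fun k => ∑ m, a2 k m • x m with hw
  have key1 : ∀ k, x i * w k = algebraMap ℂ C (2 * a2 k i) - w k * x i := by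
    intro k
    rw [hw]
    simp only [Finset.mul_sum, Finset.sum_mul, mul_smul_comm, smul_mul_assoc]
    have : ∀ m, a2 k m • (x i * x m)
        = a2 k m • algebraMap ℂ C (if i = m then 2 else 0) - a2 k m • (x m * x i) := by
      intro m; rw [hxx i m, smul_sub]
    rw [Finset.sum_congr rfl fun m _ => this m, Finset.sum_sub_distrib]
    congr 1
    have : ∀ m, a2 k m • algebraMap ℂ C (if i = m then 2 else 0)
        = algebraMap ℂ C (if i = m then 2 * a2 k m else 0) := by
      intro m
      rw [Algebra.smul_def, ← map_mul]
      congr 1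
      split <;> ring
    rw [Finset.sum_congr rfl fun m _ => this m, ← map_sum]
    congr 1
    rw [Finset.sum_ite_eq]
    simp [mul_comm]
  have key2 : ∀ k, (w k * x k) * x i - x i * (w k * x k)
      = (if k = i then (2:ℂ) else 0) • w k - (2 * a2 k i) • x k := by
    intro k
    calc (w k * x k) * x i - x i * (w k * x k)
        = w k * (x k * x i) - (x i * w k) * x k := by noncomm_ring
      _ = w k * (algebraMap ℂ C (if k = i then 2 else 0)) - w k * (x i * x k)
          - ((algebraMap ℂ C (2 * a2 k i)) * x k - (w k * x i) * x k) := by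
            rw [hxx k i, key1 k]; noncomm_ring
      _ = w k * (algebraMap ℂ C (if k = i then 2 else 0)) - algebraMap ℂ C (2 * a2 k i) * x k := by
            noncomm_ring
      _ = (if k = i then (2:ℂ) else 0) • w k - (2 * a2 k i) • x k := by
            rw [← Algebra.commutes, ← Algebra.smul_def, ← Algebra.smul_def]
  calc ((1/4 : ℂ) • ∑ k, w k * x k) * x i - x i * ((1/4 : ℂ) • ∑ k, w k * x k)
      = (1/4 : ℂ) • ∑ k, ((w k * x k) * x i - x i * (w k * x k)) := by
        rw [Finset.sum_sub_distrib]
        rw [smul_mul_assoc, mul_smul_comm, ← smul_sub, Finset.sum_mul, Finset.mul_sum]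
    _ = (1/4 : ℂ) • ∑ k, ((if k = i then (2:ℂ) else 0) • w k - (2 * a2 k i) • x k) := by
        rw [Finset.sum_congr rfl fun k _ => key2 k]
    _ = (1/4 : ℂ) • ((2:ℂ) • w i - (-2 : ℂ) • w i) := by
        rw [Finset.sum_sub_distrib]
        congr 1
        congr 1
        · simp only [ite_smul, zero_smul]
          rw [Finset.sum_ite_eq']
          simp
        · have : ∀ k, (2 * a2 k i) • x k = (-2 : ℂ) • (a2 i k • x k) := by
            intro k; rw [ha2 i k, smul_smul]; ring_nf
          rw [Finset.sum_congr rfl fun k _ => this k, ← Finset.smul_sum, hw]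
    _ = w i := by
        rw [smul_sub, smul_smul, smul_smul, ← sub_smul]
        norm_num




lemma pack4 (g : I → I → I → I → C) :
    (∑ p, ∑ q, ∑ r, ∑ i, g p q r i) = ∑ z : I × I × I × I, g z.1 z.2.1 z.2.2.1 z.2.2.2 := by
  simp [Fintype.sum_prod_type]

lemma sum4_swap14 (f : I → I → I → I → C) :
    (∑ p, ∑ q, ∑ r, ∑ i, f p q r i) = ∑ p, ∑ q, ∑ r, ∑ i, f i q r p := by
  rw [pack4, pack4]
  exact (Equiv.sum_comp
    (⟨fun z : I×I×I×I => (z.2.2.2, z.2.1, z.2.2.1, z.1),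
      fun z : I×I×I×I => (z.2.2.2, z.2.1, z.2.2.1, z.1),
      fun z => rfl, fun z => rfl⟩ : (I×I×I×I) ≃ (I×I×I×I))
    (fun z : I×I×I×I => f z.1 z.2.1 z.2.2.1 z.2.2.2)).symm

lemma sum4_swap24 (f : I → I → I → I → C) :
    (∑ p, ∑ q, ∑ r, ∑ i, f p q r i) = ∑ p, ∑ q, ∑ r, ∑ i, f p i r q := by
  rw [pack4, pack4]
  exact (Equiv.sum_comp
    (⟨fun z : I×I×I×I => (z.1, z.2.2.2, z.2.2.1, z.2.1),
      fun z : I×I×I×I => (z.1, z.2.2.2, z.2.2.1, z.2.1),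
      fun z => rfl, fun z => rfl⟩ : (I×I×I×I) ≃ (I×I×I×I))
    (fun z : I×I×I×I => f z.1 z.2.1 z.2.2.1 z.2.2.2)).symm

lemma sum4_swap34 (f : I → I → I → I → C) :
    (∑ p, ∑ q, ∑ r, ∑ i, f p q r i) = ∑ p, ∑ q, ∑ r, ∑ i, f p q i r := by
  rw [pack4, pack4]
  exact (Equiv.sum_comp
    (⟨fun z : I×I×I×I => (z.1, z.2.1, z.2.2.2, z.2.2.1),
      fun z : I×I×I×I => (z.1, z.2.1, z.2.2.2, z.2.2.1),
      fun z => rfl, fun z => rfl⟩ : (I×I×I×I) ≃ (I×I×I×I))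
    (fun z : I×I×I×I => f z.1 z.2.1 z.2.2.1 z.2.2.2)).symm

lemma NPhi (x : I → C) (t : I → I → I → ℂ) (a2 : I → I → ℂ) (N : C)
    (hN : ∀ i, N * x i - x i * N = ∑ m, a2 i m • x m)
    (hinv : ∀ p q r, ∑ i, (t i q r * a2 i p + t p i r * a2 i q + t p q i * a2 i r) = 0) :
    N * (∑ p, ∑ q, ∑ r, t p q r • (x p * x q * x r))
      = (∑ p, ∑ q, ∑ r, t p q r • (x p * x q * x r)) * N := by
  have comm3 : ∀ a b c : C, N * (a*b*c) - (a*b*c)*N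
      = (N*a - a*N)*b*c + a*(N*b - b*N)*c + a*b*(N*c - c*N) := fun a b c => by noncomm_ring
  have key : ∀ p q r, N * (x p * x q * x r) - (x p * x q * x r) * N
      = (∑ i, (a2 p i) • (x i * x q * x r)) + (∑ i, (a2 q i) • (x p * x i * x r))
        + (∑ i, (a2 r i) • (x p * x q * x i)) := by
    intro p q r
    rw [comm3, hN, hN, hN]
    simp only [Finset.sum_mul, Finset.mul_sum, smul_mul_assoc, mul_smul_comm]
  rw [← sub_eq_zero]
  calc N * (∑ p, ∑ q, ∑ r, t p q r • (x p * x q * x r))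
        - (∑ p, ∑ q, ∑ r, t p q r • (x p * x q * x r)) * N
      = ∑ p, ∑ q, ∑ r, t p q r • (N * (x p * x q * x r) - (x p * x q * x r) * N) := by
        simp only [Finset.mul_sum, Finset.sum_mul, mul_smul_comm, smul_mul_assoc,
          ← smul_sub, ← Finset.sum_sub_distrib]
    _ = (∑ p, ∑ q, ∑ r, ∑ i, (t p q r * a2 p i) • (x i * x q * x r))
        + ((∑ p, ∑ q, ∑ r, ∑ i, (t p q r * a2 q i) • (x p * x i * x r))
        + (∑ p, ∑ q, ∑ r, ∑ i, (t p q r * a2 r i) • (x p * x q * x i))) := by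
        simp only [key, smul_add, Finset.smul_sum, smul_smul, Finset.sum_add_distrib]
        abel
    _ = ∑ p, ∑ q, ∑ r, ∑ i, ((t i q r * a2 i p) • (x p * x q * x r)
          + ((t p i r * a2 i q) • (x p * x q * x r) + (t p q i * a2 i r) • (x p * x q * x r))) := by
        rw [sum4_swap14 (fun p q r i => (t p q r * a2 p i) • (x i * x q * x r)),
            sum4_swap24 (fun p q r i => (t p q r * a2 q i) • (x p * x i * x r)),
            sum4_swap34 (fun p q r i => (t p q r * a2 r i) • (x p * x q * x i))]
        simp only [← Finset.sum_add_distrib]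
    _ = ∑ p, ∑ q, ∑ r, (∑ i, (t i q r * a2 i p + (t p i r * a2 i q + t p q i * a2 i r))) • (x p * x q * x r) := by
        simp only [Finset.sum_smul, add_smul]
    _ = 0 := by
        have : ∀ p q r, (∑ i, (t i q r * a2 i p + (t p i r * a2 i q + t p q i * a2 i r))) = 0 := by
          intro p q r
          rw [← hinv p q r]
          exact Finset.sum_congr rfl fun i _ => by ring
        simp only [this, zero_smul, Finset.sum_const_zero]



lemma pack3 {M : Type*} [AddCommMonoid M] (g : I → J → I → M) :
    (∑ p, ∑ q, ∑ r, g p q r) = ∑ z : I × J × I, g z.1 z.2.1 z.2.2 := by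
  simp [Fintype.sum_prod_type]

lemma sum3_swap13 {M : Type*} [AddCommMonoid M] (f : I → J → I → M) :
    (∑ p, ∑ q, ∑ r, f p q r) = ∑ p, ∑ q, ∑ r, f r q p := by
  rw [pack3, pack3]
  exact (Equiv.sum_comp
    (⟨fun z : I×J×I => (z.2.2, z.2.1, z.1), fun z : I×J×I => (z.2.2, z.2.1, z.1),
      fun z => rfl, fun z => rfl⟩ : (I×J×I) ≃ (I×J×I))
    (fun z : I×J×I => f z.1 z.2.1 z.2.2)).symm



lemma Anti.eq {C : Type*} [Ring C] [Algebra ℂ C] {z w : C} (h : Anti z w) : z * w = -(w * z) := h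

lemma core {U C : Type*} [Ring U] [Algebra ℂ U] [Ring C] [Algebra ℂ C]
    {I J : Type*} [Fintype I] [Fintype J] [DecidableEq I]
    (EX : I → U) (EY : J → U) (x : I → C) (y : J → C)
    (t : I → I → I → ℂ) (s : J → J → J → ℂ) (a : J → I → I → ℂ)
    (hxx : ∀ i k, x i * x k = algebraMap ℂ C (if i = k then 2 else 0) - x k * x i)
    (hxy : ∀ j i, y j * x i = -(x i * y j))
    (hYX : ∀ j i, EY j * EX i = EX i * EY j + ∑ k, a j i k • EX k)
    (ha : ∀ j i k, a j k i = - a j i k)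
    (hinv : ∀ j p q r, ∑ i, (t i q r * a j i p + t p i r * a j i q + t p q i * a j i r) = 0)
    (Φ Ψ : C) (N : J → C)
    (hΦ : Φ = (-(1/12 : ℂ)) • ∑ p, ∑ q, ∑ r, t p q r • (x p * x q * x r))
    (hΨ : Ψ = (-(1/12 : ℂ)) • ∑ p, ∑ q, ∑ r, s p q r • (y p * y q * y r))
    (hn : ∀ j, N j = (1/4 : ℂ) • ∑ i, (∑ m, a j i m • x m) * x i)
    (D1 D2 : U ⊗[ℂ] C)
    (hD1 : D1 = ∑ i, EX i ⊗ₜ[ℂ] x i + 1 ⊗ₜ[ℂ] Φ)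
    (hD2 : D2 = ∑ j, (EY j ⊗ₜ[ℂ] y j + 1 ⊗ₜ[ℂ] (N j * y j)) + 1 ⊗ₜ[ℂ] Ψ) :
    D1 * D2 + D2 * D1 = 0 := by
  have hAyx : ∀ j i, Anti (y j) (x i) := hxy
  have hAyΦ : ∀ j, Anti (y j) Φ := by
    intro j; rw [hΦ]
    exact Anti.smul_right _ (Anti.sum_right _ fun p _ => Anti.sum_right _ fun q _ =>
      Anti.sum_right _ fun r _ => Anti.smul_right _
        (Anti.mul_mul_right (hAyx j p) (hAyx j q) (hAyx j r)))
  have hAxΨ : ∀ i, Anti (x i) Ψ := by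
    intro i; rw [hΨ]
    exact Anti.smul_right _ (Anti.sum_right _ fun p _ => Anti.sum_right _ fun q _ =>
      Anti.sum_right _ fun r _ => Anti.smul_right _
        (Anti.mul_mul_right (hAyx p i).symm (hAyx q i).symm (hAyx r i).symm))
  have hAΦΨ : Anti Φ Ψ := by
    rw [hΨ]
    exact Anti.smul_right _ (Anti.sum_right _ fun p _ => Anti.sum_right _ fun q _ =>
      Anti.sum_right _ fun r _ => Anti.smul_right _
        (Anti.mul_mul_right (hAyΦ p).symm (hAyΦ q).symm (hAyΦ r).symm))
  have hNx : ∀ j i, N j * x i - x i * N j = ∑ m, a j i m • x m := by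
    intro j i; rw [hn j]
    exact Nmul x (a j) hxx (fun i' k' => ha j i' k') i
  have hNΦ : ∀ j, N j * Φ = Φ * N j := by
    intro j; rw [hΦ, mul_smul_comm, smul_mul_assoc]
    congr 1
    exact NPhi x t (a j) (N j) (hNx j) (hinv j)
  have hD2' : D2 = (∑ j, EY j ⊗ₜ[ℂ] y j) + ((∑ j, (1 : U) ⊗ₜ[ℂ] (N j * y j)) + 1 ⊗ₜ[ℂ] Ψ) := by
    rw [hD2, Finset.sum_add_distrib, add_assoc]
  set SX : U ⊗[ℂ] C := ∑ i, EX i ⊗ₜ[ℂ] x i with hSX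
  set SY : U ⊗[ℂ] C := ∑ j, EY j ⊗ₜ[ℂ] y j with hSY
  set SN : U ⊗[ℂ] C := ∑ j, (1 : U) ⊗ₜ[ℂ] (N j * y j) with hSN
  set TΦ : U ⊗[ℂ] C := (1 : U) ⊗ₜ[ℂ] Φ with hTΦ
  set TΨ : U ⊗[ℂ] C := (1 : U) ⊗ₜ[ℂ] Ψ with hTΨ
  have K2 : SX * TΨ + TΨ * SX = 0 := by
    rw [hSX, hTΨ, Finset.sum_mul, Finset.mul_sum, ← Finset.sum_add_distrib]
    refine Finset.sum_eq_zero fun i _ => ?_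
    rw [Algebra.TensorProduct.tmul_mul_tmul, Algebra.TensorProduct.tmul_mul_tmul,
      one_mul, mul_one, ← TensorProduct.tmul_add, (hAxΨ i).eq, neg_add_cancel,
      TensorProduct.tmul_zero]
  have K3 : TΦ * SY + SY * TΦ = 0 := by
    rw [hSY, hTΦ, Finset.sum_mul, Finset.mul_sum, ← Finset.sum_add_distrib]
    refine Finset.sum_eq_zero fun j _ => ?_
    rw [Algebra.TensorProduct.tmul_mul_tmul, Algebra.TensorProduct.tmul_mul_tmul,
      one_mul, mul_one, ← TensorProduct.tmul_add, (hAyΦ j).eq, add_neg_cancel,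
      TensorProduct.tmul_zero]
  have K5 : TΦ * TΨ + TΨ * TΦ = 0 := by
    rw [hTΦ, hTΨ, Algebra.TensorProduct.tmul_mul_tmul, Algebra.TensorProduct.tmul_mul_tmul,
      one_mul, ← TensorProduct.tmul_add, hAΦΨ.eq, neg_add_cancel, TensorProduct.tmul_zero]
  have K4 : TΦ * SN + SN * TΦ = 0 := by
    rw [hSN, hTΦ, Finset.sum_mul, Finset.mul_sum, ← Finset.sum_add_distrib]
    refine Finset.sum_eq_zero fun j _ => ?_
    rw [Algebra.TensorProduct.tmul_mul_tmul, Algebra.TensorProduct.tmul_mul_tmul,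
      one_mul, ← TensorProduct.tmul_add]
    have hz : Φ * (N j * y j) + N j * y j * Φ = 0 := by
      have h1 : y j * Φ = -(Φ * y j) := (hAyΦ j).eq
      calc Φ * (N j * y j) + N j * y j * Φ
          = (Φ * N j) * y j + N j * (y j * Φ) := by noncomm_ring
        _ = (N j * Φ) * y j + N j * (-(Φ * y j)) := by rw [h1, hNΦ j]
        _ = 0 := by noncomm_ring
    rw [hz, TensorProduct.tmul_zero]
  have P1 : SX * SY + SY * SX
      = ∑ i, ∑ j, ∑ k, (-(a j i k)) • (EX k ⊗ₜ[ℂ] (x i * y j)) := by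
    rw [hSX, hSY, Finset.sum_mul_sum, Finset.sum_mul_sum]
    rw [Finset.sum_comm (s := Finset.univ) (t := Finset.univ)
      (f := fun j i => (EY j ⊗ₜ[ℂ] y j) * (EX i ⊗ₜ[ℂ] x i))]
    rw [← Finset.sum_add_distrib]
    refine Finset.sum_congr rfl fun i _ => ?_
    rw [← Finset.sum_add_distrib]
    refine Finset.sum_congr rfl fun j _ => ?_
    rw [Algebra.TensorProduct.tmul_mul_tmul, Algebra.TensorProduct.tmul_mul_tmul,
      hxy j i, TensorProduct.tmul_neg, hYX j i, TensorProduct.add_tmul, TensorProduct.sum_tmul]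
    have : ∀ k, (a j i k • EX k) ⊗ₜ[ℂ] (x i * y j) = a j i k • (EX k ⊗ₜ[ℂ] (x i * y j)) :=
      fun k => TensorProduct.smul_tmul' _ _ _
    rw [Finset.sum_congr rfl fun k _ => this k]
    simp only [neg_smul, Finset.sum_neg_distrib]
    abel
  have P2 : SX * SN + SN * SX
      = ∑ i, ∑ j, ∑ m, (a j m i) • (EX i ⊗ₜ[ℂ] (x m * y j)) := by
    rw [hSX, hSN, Finset.sum_mul_sum, Finset.sum_mul_sum]
    rw [Finset.sum_comm (s := Finset.univ) (t := Finset.univ)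
      (f := fun j i => ((1:U) ⊗ₜ[ℂ] (N j * y j)) * (EX i ⊗ₜ[ℂ] x i))]
    rw [← Finset.sum_add_distrib]
    refine Finset.sum_congr rfl fun i _ => ?_
    rw [← Finset.sum_add_distrib]
    refine Finset.sum_congr rfl fun j _ => ?_
    rw [Algebra.TensorProduct.tmul_mul_tmul, Algebra.TensorProduct.tmul_mul_tmul,
      one_mul, mul_one, ← TensorProduct.tmul_add]
    have hz : x i * (N j * y j) + N j * y j * x i = ∑ m, (a j m i) • (x m * y j) := by
      have h1 : y j * x i = -(x i * y j) := hxy j i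
      have h2 : x i * N j - N j * x i = -(∑ m, a j i m • x m) := by
        rw [← hNx j i]; noncomm_ring
      calc x i * (N j * y j) + N j * y j * x i
          = (x i * N j - N j * x i) * y j + N j * (y j * x i + x i * y j) := by noncomm_ring
        _ = (-(∑ m, a j i m • x m)) * y j + N j * 0 := by rw [h2, h1, neg_add_cancel]
        _ = ∑ m, (-(a j i m)) • (x m * y j) := by
            rw [mul_zero, add_zero, neg_mul, Finset.sum_mul, ← Finset.sum_neg_distrib]
            exact Finset.sum_congr rfl fun m _ => by rw [smul_mul_assoc, neg_smul]
        _ = ∑ m, (a j m i) • (x m * y j) := by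
            exact Finset.sum_congr rfl fun m _ => by rw [ha j m i, neg_neg]
    rw [hz, TensorProduct.tmul_sum]
    exact Finset.sum_congr rfl fun m _ => TensorProduct.tmul_smul _ _ _
  have K1 : SX * SY + SY * SX + (SX * SN + SN * SX) = 0 := by
    rw [P1, P2]
    rw [sum3_swap13 (fun i j m => (a j m i) • (EX i ⊗ₜ[ℂ] (x m * y j)))]
    simp only [← Finset.sum_add_distrib]
    refine Finset.sum_eq_zero fun i _ => Finset.sum_eq_zero fun j _ =>
      Finset.sum_eq_zero fun k _ => ?_
    rw [neg_smul, neg_add_cancel]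
  rw [hD1, hD2']
  calc (SX + TΦ) * (SY + (SN + TΨ)) + (SY + (SN + TΨ)) * (SX + TΦ)
      = (SX * SY + SY * SX + (SX * SN + SN * SX)) + ((SX * TΨ + TΨ * SX)
        + ((TΦ * SY + SY * TΦ) + ((TΦ * SN + SN * TΦ) + (TΦ * TΨ + TΨ * TΦ)))) := by
        noncomm_ring
    _ = 0 := by rw [K1, K2, K3, K4, K5]; simp

end DiracAux

/-- Anticommutation lemma: the components `D'` and `D''` of the decomposition
`D_𝔤 = D' + D''` anticommute: `D'·D'' + D''·D' = 0`. -/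
theorem dirac_components_anticommute {L : Type*} [LieRing L] [LieAlgebra ℂ L]
    [FiniteDimensional ℂ L]
    (B : LinearMap.BilinForm ℂ L)
    (hB_symm : ∀ x y : L, B x y = B y x)
    (hB_inv : ∀ x y z : L, B ⁅x, y⁆ z + B y ⁅x, z⁆ = 0)
    (hB_nd : B.Nondegenerate)
    (H : LieSubalgebra ℂ L)
    (hB_nd_H : ∀ y ∈ H, (∀ z ∈ H, B y z = 0) → y = 0)
    (Hp : Submodule ℂ L)
    (hHp : ∀ x : L, x ∈ Hp ↔ ∀ y ∈ H, B y x = 0)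
    (hcompl : IsCompl H.toSubmodule Hp)
    (hstab : ∀ (y : H) (x : Hp), ⁅(y : L), (x : L)⁆ ∈ Hp)
    {I : Type*} [Fintype I] [DecidableEq I] (X : Module.Basis I ℂ Hp)
    (hX : ∀ i j, B (X i : L) (X j : L) = if i = j then 1 else 0)
    {J : Type*} [Fintype J] [DecidableEq J] (Y : Module.Basis J ℂ H)
    (hY : ∀ i j, B (Y i : L) (Y j : L) = if i = j then 1 else 0)
    -- the cubic element `v_{𝔤/𝔥}` of `C(𝔥^⊥)`
    (v : CliffordAlgebra (restrictedQF B Hp))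
    (hv : v = (-(1/12 : ℂ)) • ∑ i : I, ∑ j : I, ∑ k : I,
        B (X i : L) ⁅(X j : L), (X k : L)⁆ •
          (ι (restrictedQF B Hp) (X i) * ι (restrictedQF B Hp) (X j) *
            ι (restrictedQF B Hp) (X k)))
    -- the cubic element `v_𝔥` of `C(𝔥)`
    (vh : CliffordAlgebra (restrictedQF B H.toSubmodule))
    (hvh : vh = (-(1/12 : ℂ)) • ∑ j : J, ∑ k : J, ∑ l : J,
        B (Y j : L) ⁅(Y k : L), (Y l : L)⁆ •
          (ι (restrictedQF B H.toSubmodule) (Y j) * ι (restrictedQF B H.toSubmodule) (Y k) *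
            ι (restrictedQF B H.toSubmodule) (Y l)))
    (ν : H → CliffordAlgebra (restrictedQF B Hp))
    (hν : ∀ y : H, ν y = (1/4 : ℂ) • ∑ i : I,
        ι (restrictedQF B Hp) ⟨⁅(y : L), (X i : L)⁆, hstab y (X i)⟩ *
          ι (restrictedQF B Hp) (X i))
    (D' D'' : UniversalEnvelopingAlgebra ℂ L ⊗[ℂ] CliffordAlgebra B.toQuadraticMap)
    (hD' : D' = ∑ i : I,
        (UniversalEnvelopingAlgebra.ι ℂ (X i : L)) ⊗ₜ[ℂ]
          (CliffordAlgebra.map (inclIsometry B Hp) (ι (restrictedQF B Hp) (X i)))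
        + 1 ⊗ₜ[ℂ] (CliffordAlgebra.map (inclIsometry B Hp) v))
    (hD'' : D'' = ∑ j : J,
        ((UniversalEnvelopingAlgebra.ι ℂ (Y j : L)) ⊗ₜ[ℂ] 1
          + 1 ⊗ₜ[ℂ] (CliffordAlgebra.map (inclIsometry B Hp) (ν (Y j))))
        * (1 ⊗ₜ[ℂ] (CliffordAlgebra.map (inclIsometry B H.toSubmodule)
            (ι (restrictedQF B H.toSubmodule) (Y j))))
        + 1 ⊗ₜ[ℂ] (CliffordAlgebra.map (inclIsometry B H.toSubmodule) vh)) :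
    D' * D'' + D'' * D' = 0 := by
  
  classical
  letI : LieRing (UniversalEnvelopingAlgebra ℂ L) := LieRing.ofAssociativeRing
  letI : LieAlgebra ℂ (UniversalEnvelopingAlgebra ℂ L) := LieAlgebra.ofAssociativeAlgebra
  -- basic B-facts
  have hBYX : ∀ (j : J) (i : I), B (Y j : L) (X i : L) = 0 :=
    fun j i => (hHp (X i : L)).mp (X i).2 (Y j : L) (Y j).2
  have hBXY : ∀ (i : I) (j : J), B (X i : L) (Y j : L) = 0 :=
    fun i j => by rw [hB_symm]; exact hBYX j i
  have hainv : ∀ x' y' z' : L, B ⁅x', y'⁆ z' = -(B y' ⁅x', z'⁆) := by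
    intro x' y' z'; have h := hB_inv x' y' z'; linear_combination h
  have sum_lie' : ∀ (f : I → L) (w : L), ⁅∑ i, f i, w⁆ = ∑ i, ⁅f i, w⁆ := by
    intro f w
    induction (Finset.univ : Finset I) using Finset.induction_on with
    | empty => simp
    | insert _ _ hx ih => rw [Finset.sum_insert hx, add_lie, ih, Finset.sum_insert hx]
  have lie_sum' : ∀ (f : I → L) (w : L), ⁅w, ∑ i, f i⁆ = ∑ i, ⁅w, f i⁆ := by
    intro f w
    induction (Finset.univ : Finset I) using Finset.induction_on with
    | empty => simp
    | insert _ _ hx ih => rw [Finset.sum_insert hx, lie_add, ih, Finset.sum_insert hx]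
  -- Clifford anticommutation
  have ι_anti : ∀ u w : L, ι B.toQuadraticMap u * ι B.toQuadraticMap w
      = algebraMap ℂ _ (B u w + B w u)
        - ι B.toQuadraticMap w * ι B.toQuadraticMap u := by
    intro u w
    rw [eq_sub_iff_add_eq, CliffordAlgebra.ι_mul_ι_add_swap,
      LinearMap.BilinMap.polar_toQuadraticMap]
  -- enveloping algebra commutation
  have e_comm : ∀ u w : L, UniversalEnvelopingAlgebra.ι ℂ u * UniversalEnvelopingAlgebra.ι ℂ w
      = UniversalEnvelopingAlgebra.ι ℂ w * UniversalEnvelopingAlgebra.ι ℂ u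
        + UniversalEnvelopingAlgebra.ι ℂ ⁅u, w⁆ := by
    intro u w
    have h := LieHom.map_lie (UniversalEnvelopingAlgebra.ι ℂ (L := L)) u w
    rw [Ring.lie_def] at h
    rw [h]; noncomm_ring
  -- orthonormal expansion in Hp
  have HE : ∀ u : L, u ∈ Hp → u = ∑ i, B (X i : L) u • (X i : L) := by
    intro u hu
    have h1 : (⟨u, hu⟩ : Hp) = ∑ i, X.repr ⟨u, hu⟩ i • X i := (X.sum_repr ⟨u, hu⟩).symm
    have h2 : u = ∑ i, X.repr ⟨u, hu⟩ i • (X i : L) := by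
      conv_lhs => rw [show u = ((⟨u, hu⟩ : Hp) : L) from rfl, h1]
      simp only [Submodule.coe_sum, Submodule.coe_smul]
    have h3 : ∀ k, B (X k : L) u = X.repr ⟨u, hu⟩ k := by
      intro k
      conv_lhs => rw [h2]
      rw [map_sum]
      have : ∀ i, B (X k : L) (X.repr ⟨u, hu⟩ i • (X i : L))
          = X.repr ⟨u, hu⟩ i * (if k = i then 1 else 0) := by
        intro i; rw [map_smul, hX k i]; rfl
      rw [Finset.sum_congr rfl fun i _ => this i]
      simp [Finset.sum_ite_eq]
    conv_lhs => rw [h2]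
    exact Finset.sum_congr rfl fun i _ => by rw [h3 i]
  have HBsum : ∀ u : L, u ∈ Hp → ∀ w : L,
      (∑ i, B (X i : L) u * B (X i : L) w) = B u w := by
    intro u hu w
    have : B u w = ∑ i, B (X i : L) u * B (X i : L) w := by
      conv_lhs => rw [HE u hu]
      rw [map_sum, LinearMap.sum_apply]
      refine Finset.sum_congr rfl fun i _ => ?_
      rw [map_smul, LinearMap.smul_apply, smul_eq_mul]
    exact this.symm
  have HBsum2 : ∀ u : L, u ∈ Hp → ∀ v' w : L,
      (∑ i, B (X i : L) u * B v' ⁅(X i : L), w⁆) = B v' ⁅u, w⁆ := by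
    intro u hu v' w
    have : B v' ⁅u, w⁆ = ∑ i, B (X i : L) u * B v' ⁅(X i : L), w⁆ := by
      conv_lhs => rw [HE u hu]
      rw [sum_lie', map_sum]
      refine Finset.sum_congr rfl fun i _ => ?_
      rw [smul_lie, map_smul, smul_eq_mul]
    exact this.symm
  have HBsum3 : ∀ u : L, u ∈ Hp → ∀ v' w : L,
      (∑ i, B (X i : L) u * B v' ⁅w, (X i : L)⁆) = B v' ⁅w, u⁆ := by
    intro u hu v' w
    have : B v' ⁅w, u⁆ = ∑ i, B (X i : L) u * B v' ⁅w, (X i : L)⁆ := by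
      conv_lhs => rw [HE u hu]
      rw [lie_sum', map_sum]
      refine Finset.sum_congr rfl fun i _ => ?_
      rw [lie_smul, map_smul, smul_eq_mul]
    exact this.symm
  -- clifford images
  have hφι : ∀ p : Hp, CliffordAlgebra.map (inclIsometry B Hp) (ι (restrictedQF B Hp) p)
      = ι B.toQuadraticMap (p : L) := fun p => CliffordAlgebra.map_apply_ι _ _
  have hψι : ∀ p : H.toSubmodule,
      CliffordAlgebra.map (inclIsometry B H.toSubmodule) (ι (restrictedQF B H.toSubmodule) p)
      = ι B.toQuadraticMap (p : L) := fun p => CliffordAlgebra.map_apply_ι _ _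
  refine DiracAux.core
    (fun i => UniversalEnvelopingAlgebra.ι ℂ (X i : L))
    (fun j => UniversalEnvelopingAlgebra.ι ℂ (Y j : L))
    (fun i => ι B.toQuadraticMap (X i : L))
    (fun j => ι B.toQuadraticMap (Y j : L))
    (fun i j k => B (X i : L) ⁅(X j : L), (X k : L)⁆)
    (fun j k l => B (Y j : L) ⁅(Y k : L), (Y l : L)⁆)
    (fun j i k => B (X k : L) ⁅(Y j : L), (X i : L)⁆)
    ?_ ?_ ?_ ?_ ?_
    (CliffordAlgebra.map (inclIsometry B Hp) v)
    (CliffordAlgebra.map (inclIsometry B H.toSubmodule) vh)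
    (fun j => CliffordAlgebra.map (inclIsometry B Hp) (ν (Y j)))
    ?_ ?_ ?_ D' D'' ?_ ?_
  · -- hxx
    intro i k
    beta_reduce
    rw [ι_anti, hX i k, hX k i]
    by_cases h : i = k
    · subst h; norm_num
    · have h' : ¬ k = i := fun hh => h hh.symm
      simp [h, h']
  · -- hxy
    intro j i
    beta_reduce
    rw [ι_anti, hBYX j i, hBXY i j]
    simp
  · -- hYX
    intro j i
    beta_reduce
    rw [e_comm]
    congr 1
    have hmem := hstab (Y j) (X i)
    have := HE _ hmem
    calc UniversalEnvelopingAlgebra.ι ℂ ⁅(Y j : L), (X i : L)⁆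
        = (UniversalEnvelopingAlgebra.ι ℂ (L := L)).toLinearMap
            (∑ k, B (X k : L) ⁅(Y j : L), (X i : L)⁆ • (X k : L)) := by
          rw [← this]; rfl
      _ = ∑ k, B (X k : L) ⁅(Y j : L), (X i : L)⁆ •
            UniversalEnvelopingAlgebra.ι ℂ (X k : L) := by
          rw [map_sum]
          exact Finset.sum_congr rfl fun k _ => by rw [map_smul]; rfl
  · -- ha
    intro j i k
    beta_reduce
    have h2 := hainv (Y j : L) (X k : L) (X i : L)
    rw [hB_symm (X i : L) ⁅(Y j : L), (X k : L)⁆]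
    exact h2
  · -- hinv
    intro j p q r
    beta_reduce
    have hup : ⁅(Y j : L), (X p : L)⁆ ∈ Hp := hstab (Y j) (X p)
    have huq : ⁅(Y j : L), (X q : L)⁆ ∈ Hp := hstab (Y j) (X q)
    have hur : ⁅(Y j : L), (X r : L)⁆ ∈ Hp := hstab (Y j) (X r)
    have hap : ∀ i : I, B (X p : L) ⁅(Y j : L), (X i : L)⁆
        = -(B (X i : L) ⁅(Y j : L), (X p : L)⁆) := by
      intro i
      have h1 := hainv (Y j : L) (X p : L) (X i : L)
      rw [hB_symm (X i : L) ⁅(Y j : L), (X p : L)⁆]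
      linear_combination h1
    have haq : ∀ i : I, B (X q : L) ⁅(Y j : L), (X i : L)⁆
        = -(B (X i : L) ⁅(Y j : L), (X q : L)⁆) := by
      intro i
      have h1 := hainv (Y j : L) (X q : L) (X i : L)
      rw [hB_symm (X i : L) ⁅(Y j : L), (X q : L)⁆]
      linear_combination h1
    have har : ∀ i : I, B (X r : L) ⁅(Y j : L), (X i : L)⁆
        = -(B (X i : L) ⁅(Y j : L), (X r : L)⁆) := by
      intro i
      have h1 := hainv (Y j : L) (X r : L) (X i : L)
      rw [hB_symm (X i : L) ⁅(Y j : L), (X r : L)⁆]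
      linear_combination h1
    have S1 : (∑ i, B (X i : L) ⁅(X q : L), (X r : L)⁆ * B (X p : L) ⁅(Y j : L), (X i : L)⁆)
        = -(B ⁅(Y j : L), (X p : L)⁆ ⁅(X q : L), (X r : L)⁆) := by
      rw [← HBsum _ hup ⁅(X q : L), (X r : L)⁆, ← Finset.sum_neg_distrib]
      exact Finset.sum_congr rfl fun i _ => by rw [hap i]; ring
    have S2 : (∑ i, B (X p : L) ⁅(X i : L), (X r : L)⁆ * B (X q : L) ⁅(Y j : L), (X i : L)⁆)
        = -(B (X p : L) ⁅⁅(Y j : L), (X q : L)⁆, (X r : L)⁆) := by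
      rw [← HBsum2 _ huq (X p : L) (X r : L), ← Finset.sum_neg_distrib]
      exact Finset.sum_congr rfl fun i _ => by rw [haq i]; ring
    have S3 : (∑ i, B (X p : L) ⁅(X q : L), (X i : L)⁆ * B (X r : L) ⁅(Y j : L), (X i : L)⁆)
        = -(B (X p : L) ⁅(X q : L), ⁅(Y j : L), (X r : L)⁆⁆) := by
      rw [← HBsum3 _ hur (X p : L) (X q : L), ← Finset.sum_neg_distrib]
      exact Finset.sum_congr rfl fun i _ => by rw [har i]; ring
    rw [Finset.sum_add_distrib, Finset.sum_add_distrib, S1, S2, S3]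
    have hjac : B (X p : L) ⁅⁅(Y j : L), (X q : L)⁆, (X r : L)⁆
        + B (X p : L) ⁅(X q : L), ⁅(Y j : L), (X r : L)⁆⁆
        = B (X p : L) ⁅(Y j : L), ⁅(X q : L), (X r : L)⁆⁆ := by
      rw [← map_add, ← leibniz_lie]
    have hfin := hB_inv (Y j : L) (X p : L) ⁅(X q : L), (X r : L)⁆
    linear_combination -hfin - hjac
  · -- hΦ
    rw [hv]
    simp only [map_smul, map_sum, map_mul, hφι]
  · -- hΨ
    rw [hvh]
    simp only [map_smul, map_sum, map_mul, hψι]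
  · -- hn
    intro j
    beta_reduce
    rw [hν (Y j)]
    simp only [map_smul, map_sum, map_mul, hφι]
    congr 1
    refine Finset.sum_congr rfl fun i _ => ?_
    congr 1
    have hmem := hstab (Y j) (X i)
    calc ι B.toQuadraticMap ((⟨⁅(Y j : L), (X i : L)⁆, hstab (Y j) (X i)⟩ : Hp) : L)
        = ι B.toQuadraticMap (∑ m, B (X m : L) ⁅(Y j : L), (X i : L)⁆ • (X m : L)) := by
          rw [← HE _ hmem]
      _ = ∑ m, B (X m : L) ⁅(Y j : L), (X i : L)⁆ • ι B.toQuadraticMap (X m : L) := by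
          rw [map_sum]
          exact Finset.sum_congr rfl fun m _ => by rw [map_smul]
  · -- hD1
    rw [hD']
    congr 1
    exact Finset.sum_congr rfl fun i _ => by rw [hφι]
  · -- hD2
    rw [hD'']
    congr 1
    refine Finset.sum_congr rfl fun j _ => ?_
    rw [hψι, add_mul, Algebra.TensorProduct.tmul_mul_tmul, Algebra.TensorProduct.tmul_mul_tmul,
      one_mul, mul_one, one_mul]
end
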